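/- arXiv:1605.06663 — 7 statements merged into one kernel-verified Lean document; each statement's English description precedes it below -/
import Mathlib

section
/- Define h : ℤ → ℝ by h(j) = j² / log(|j| + e). Then for all integers j and l, |h(j) - h(j-l)| ≤ 3|l|²/log(|l|+e) + 3|l||j-l|/log(|j-l|+e). -/
open Real

lemma aux_L_one (x : ℝ) (hx : 0 ≤ x) : 1 ≤ Real.log (x + Real.exp 1) := by
  calc (1:ℝ) = Real.log (Real.exp 1) := (Real.log_exp 1).symm
  _ ≤ _ := Real.log_le_log (Real.exp_pos 1) (by linarith)

lemma aux_L_mono (x y : ℝ) (hx : 0 ≤ x) (hxy : x ≤ y) :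
    Real.log (x + Real.exp 1) ≤ Real.log (y + Real.exp 1) := by
  have := Real.exp_pos 1
  exact Real.log_le_log (by linarith) (by linarith)

lemma aux_Ldiff (x y : ℝ) (hx : 0 ≤ x) (hxy : x ≤ y) :
    (Real.log (y + Real.exp 1) - Real.log (x + Real.exp 1)) * (x + Real.exp 1) ≤ y - x := by
  have he : (0:ℝ) < Real.exp 1 := Real.exp_pos 1
  have hpx : (0:ℝ) < x + Real.exp 1 := by linarith
  have hpy : (0:ℝ) < y + Real.exp 1 := by linarith
  have h := Real.log_le_sub_one_of_pos (show 0 < (y + Real.exp 1)/(x + Real.exp 1) by positivity)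
  rw [Real.log_div (ne_of_gt hpy) (ne_of_gt hpx)] at h
  have h2 := mul_le_mul_of_nonneg_right h hpx.le
  have h3 : ((y + Real.exp 1)/(x + Real.exp 1) - 1) * (x + Real.exp 1) = y - x := by
    field_simp
    ring
  linarith [h3 ▸ h2]

lemma aux_ratio_mono (x y : ℝ) (hx : 0 ≤ x) (hxy : x ≤ y) :
    x * Real.log (y + Real.exp 1) ≤ y * Real.log (x + Real.exp 1) := by
  have he : (0:ℝ) < Real.exp 1 := Real.exp_pos 1
  have h1 : 1 ≤ Real.log (x + Real.exp 1) := aux_L_one x hx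
  have hmono := aux_L_mono x y hx hxy
  have h2 := aux_Ldiff x y hx hxy
  nlinarith [mul_nonneg (sub_nonneg.mpr hmono) he.le,
    mul_nonneg (sub_nonneg.mpr hxy) (sub_nonneg.mpr h1), h2]

lemma aux_g_mono (x y : ℝ) (hx : 0 ≤ x) (hxy : x ≤ y) :
    x ^ 2 / Real.log (x + Real.exp 1) ≤ y ^ 2 / Real.log (y + Real.exp 1) := by
  have hLx : (0:ℝ) < Real.log (x + Real.exp 1) := lt_of_lt_of_le one_pos (aux_L_one x hx)
  have hLy : (0:ℝ) < Real.log (y + Real.exp 1) := lt_of_lt_of_le one_pos (aux_L_one y (hx.trans hxy))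
  rw [div_le_div_iff₀ hLx hLy]
  have hr := aux_ratio_mono x y hx hxy
  nlinarith [mul_le_mul_of_nonneg_left hr hx,
    mul_nonneg (mul_nonneg (sub_nonneg.mpr hxy) (hx.trans hxy)) hLx.le]

lemma aux_key (a b c : ℝ) (ha : 0 ≤ a) (hb : 0 ≤ b) (hc : 0 ≤ c)
    (h1 : a ≤ b + c) (h2 : b ≤ a + c) :
    |a ^ 2 / Real.log (a + Real.exp 1) - b ^ 2 / Real.log (b + Real.exp 1)| ≤
      3 * c ^ 2 / Real.log (c + Real.exp 1) +
      3 * c * b / Real.log (b + Real.exp 1) := by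
  set La := Real.log (a + Real.exp 1) with hLa
  set Lb := Real.log (b + Real.exp 1) with hLb
  set Lc := Real.log (c + Real.exp 1) with hLc
  have hLa1 : 1 ≤ La := aux_L_one a ha
  have hLb1 : 1 ≤ Lb := aux_L_one b hb
  have hLc1 : 1 ≤ Lc := aux_L_one c hc
  have hLap : (0:ℝ) < La := lt_of_lt_of_le one_pos hLa1
  have hLbp : (0:ℝ) < Lb := lt_of_lt_of_le one_pos hLb1
  have hLcp : (0:ℝ) < Lc := lt_of_lt_of_le one_pos hLc1
  have hcc : 0 ≤ c ^ 2 / Lc := by positivity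
  have hcb : 0 ≤ c * b / Lb := by positivity
  rcases le_total a b with hab | hab
  · -- a ≤ b
    rw [abs_sub_comm, abs_of_nonneg (sub_nonneg.mpr (aux_g_mono a b ha hab))]
    have hLL : La ≤ Lb := aux_L_mono a b ha hab
    have s1 : a ^ 2 / Lb ≤ a ^ 2 / La :=
      div_le_div_of_nonneg_left (sq_nonneg a) hLap hLL
    have s2 : b ^ 2 - a ^ 2 ≤ 2 * c * b := by nlinarith
    have s3 : (b ^ 2 - a ^ 2) / Lb ≤ (2 * c * b) / Lb :=
      div_le_div_of_nonneg_right s2 hLbp.le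
    have e1 : (b ^ 2 - a ^ 2) / Lb = b ^ 2 / Lb - a ^ 2 / Lb := by ring
    have e2 : (2 * c * b) / Lb = 2 * (c * b / Lb) := by ring
    have e3 : 3 * c ^ 2 / Lc = 3 * (c ^ 2 / Lc) := by ring
    have e4 : 3 * c * b / Lb = 3 * (c * b / Lb) := by ring
    linarith
  · -- b ≤ a
    rw [abs_of_nonneg (sub_nonneg.mpr (aux_g_mono b a hb hab))]
    have hLL : Lb ≤ La := aux_L_mono b a hb hab
    have s1 : b ^ 2 / La ≤ b ^ 2 / Lb :=
      div_le_div_of_nonneg_left (sq_nonneg b) hLbp hLL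
    have s2 : a ^ 2 - b ^ 2 ≤ c * a + c * b := by nlinarith
    have s3 : (a ^ 2 - b ^ 2) / La ≤ (c * a + c * b) / La :=
      div_le_div_of_nonneg_right s2 hLap.le
    have s4 : c * b / La ≤ c * b / Lb :=
      div_le_div_of_nonneg_left (mul_nonneg hc hb) hLbp hLL
    -- a / La ≤ b / Lb + c / Lc
    set Ld := Real.log (b + c + Real.exp 1) with hLd
    have hLd1 : 1 ≤ Ld := aux_L_one (b + c) (by linarith)
    have hLdp : (0:ℝ) < Ld := lt_of_lt_of_le one_pos hLd1
    have t1 : a / La ≤ (b + c) / Ld := by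
      rw [div_le_div_iff₀ hLap hLdp]
      exact aux_ratio_mono a (b + c) ha h1
    have t2 : b / Ld ≤ b / Lb :=
      div_le_div_of_nonneg_left hb hLbp (aux_L_mono b (b + c) hb (by linarith))
    have t3 : c / Ld ≤ c / Lc :=
      div_le_div_of_nonneg_left hc hLcp (by
        rw [hLd, hLc]
        exact aux_L_mono c (b + c) hc (by linarith))
    have t4 : (b + c) / Ld = b / Ld + c / Ld := by ring
    have s5 : a / La ≤ b / Lb + c / Lc := by linarith
    have s6 : c * (a / La) ≤ c * (b / Lb + c / Lc) := mul_le_mul_of_nonneg_left s5 hc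
    have e0 : c * (a / La) = c * a / La := by ring
    have e0' : c * (b / Lb + c / Lc) = c * b / Lb + c ^ 2 / Lc := by ring
    have e1 : (a ^ 2 - b ^ 2) / La = a ^ 2 / La - b ^ 2 / La := by ring
    have e2 : (c * a + c * b) / La = c * a / La + c * b / La := by ring
    have s4' : c * b / La ≤ c * b / Lb := s4
    have e3 : 3 * c ^ 2 / Lc = 3 * (c ^ 2 / Lc) := by ring
    have e4 : 3 * c * b / Lb = 3 * (c * b / Lb) := by ring
    linarith

/-- difference estimate for h(j) = j² / log(|j| + e) on the integers. -/
theorem stmt_1 (h : ℤ → ℝ)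
    (hh : ∀ j : ℤ, h j = (j : ℝ) ^ 2 / Real.log (|(j : ℝ)| + Real.exp 1)) :
    ∀ j l : ℤ,
      |h j - h (j - l)| ≤
        3 * |(l : ℝ)| ^ 2 / Real.log (|(l : ℝ)| + Real.exp 1) +
        3 * |(l : ℝ)| * |((j - l : ℤ) : ℝ)| / Real.log (|((j - l : ℤ) : ℝ)| + Real.exp 1) := by
  intro j l
  rw [hh j, hh (j - l), ← sq_abs ((j : ℝ)), ← sq_abs (((j - l : ℤ) : ℝ))]
  have hcast : ((j - l : ℤ) : ℝ) = (j : ℝ) - (l : ℝ) := by push_cast; ring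
  apply aux_key _ _ _ (abs_nonneg _) (abs_nonneg _) (abs_nonneg _)
  · rw [hcast]
    calc |(j : ℝ)| = |((j : ℝ) - l) + l| := by ring_nf
    _ ≤ |(j : ℝ) - l| + |(l : ℝ)| := abs_add_le _ _
  · rw [hcast]
    calc |(j : ℝ) - l| ≤ |(j : ℝ)| + |(l : ℝ)| := abs_sub _ _
end

section
/- Let 𝓛 be the Fourier multiplier on L²(𝕋) satisfying 𝓛(f)^(0) = 0 and |𝓛(f)^(k)| ≤ C₀ log(2|k|)|f̂(k)| for k ≠ 0. Then for all p ≥ 1 and f ∈ H¹(𝕋), ‖𝓛(f)‖_{L²} ≤ C p ‖f‖_{L²}^{1−1/p} ‖∂_γ f‖_{L²}^{1/p}, where C depends only on C₀. -/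
open Real MeasureTheory
open scoped ENNReal

instance : Fact ((0 : ℝ) < 2 * π) := ⟨by positivity⟩

lemma my_fourierCoeff_congr {T : ℝ} [hT : Fact (0 < T)] {f g : AddCircle T → ℂ}
    (h : f =ᵐ[AddCircle.haarAddCircle] g) (n : ℤ) : fourierCoeff f n = fourierCoeff g n := by
  unfold fourierCoeff
  exact integral_congr_ae (h.mono fun x hx => by simp only [hx])

lemma my_parseval {T : ℝ} [hT : Fact (0 < T)] {f : AddCircle T → ℂ}
    (hf : MemLp f 2 AddCircle.haarAddCircle) :
    Summable (fun i : ℤ => ‖fourierCoeff f i‖ ^ 2) ∧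
    ∑' i : ℤ, ‖fourierCoeff f i‖ ^ 2 = ((eLpNorm f 2 AddCircle.haarAddCircle).toReal) ^ 2 := by
  set F := hf.toLp f with hF
  have hcongr : ∀ i : ℤ, fourierCoeff f i = fourierCoeff (F : AddCircle T → ℂ) i := fun i =>
    my_fourierCoeff_congr (hf.coeFn_toLp).symm i
  have hrepr : ∀ i : ℤ, fourierBasis.repr F i = fourierCoeff (F : AddCircle T → ℂ) i :=
    fun i => fourierBasis_repr F i
  have h2 : (0:ℝ) < (2 : ℝ≥0∞).toReal := by norm_num
  have hsum : Summable (fun i : ℤ => ‖fourierBasis.repr F i‖ ^ ((2:ℝ≥0∞)).toReal) :=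
    (memℓp_gen_iff h2).1 (lp.memℓp (fourierBasis.repr F))
  have hnorm := lp.norm_rpow_eq_tsum h2 (fourierBasis.repr F)
  have htr : ((2:ℝ≥0∞)).toReal = ((2:ℕ):ℝ) := by norm_num
  constructor
  · have : Summable (fun i : ℤ => ‖fourierBasis.repr F i‖ ^ (2:ℕ)) := by
      convert hsum using 2 with i
      rw [htr, Real.rpow_natCast]
    simpa [hrepr, hcongr] using this
  · have key : ∑' i : ℤ, ‖fourierBasis.repr F i‖ ^ (2:ℕ) = ‖F‖ ^ (2:ℕ) := by
      have := hnorm.symm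
      simp_rw [htr, Real.rpow_natCast] at this
      rw [fourierBasis.repr.norm_map F] at this
      exact_mod_cast this
    have hFn : ‖F‖ = (eLpNorm f 2 AddCircle.haarAddCircle).toReal := by
      rw [hF]
      simpa using MeasureTheory.Lp.norm_toLp f hf
    rw [← hFn]
    simp_rw [hcongr, ← hrepr]
    exact_mod_cast key

lemma my_holder {a b : ℤ → ℝ} (ha : ∀ k, 0 ≤ a k) (hb : ∀ k, 0 ≤ b k)
    (hsa : Summable a) (hsb : Summable b) {p : ℝ} (hp : 1 ≤ p) :
    Summable (fun k => a k ^ (1 - 1/p) * b k ^ (1/p)) ∧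
    ∑' k, a k ^ (1 - 1/p) * b k ^ (1/p) ≤ (∑' k, a k) ^ (1 - 1/p) * (∑' k, b k) ^ (1/p) := by
  rcases eq_or_lt_of_le hp with rfl | hp1
  · simp only [div_one, sub_self, Real.rpow_zero, Real.rpow_one, one_mul]
    exact ⟨hsb, le_refl _⟩
  · have hp0 : 0 < p := lt_trans one_pos hp1
    have hpm : 0 < p - 1 := by linarith
    set P : ℝ := p / (p - 1) with hP
    have hPQ : P.HolderConjugate p := (Real.HolderConjugate.conjExponent hp1).symm
    have e1 : (1 - 1/p) * P = 1 := by rw [hP]; field_simp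
    have e2 : (1/p) * p = 1 := by field_simp
    have h1P : 1 / P = 1 - 1/p := by rw [hP]; field_simp
    have hfa : ∀ k, (a k ^ (1 - 1/p)) ^ P = a k := fun k => by
      rw [← Real.rpow_mul (ha k), e1, Real.rpow_one]
    have hfb : ∀ k, (b k ^ (1/p)) ^ p = b k := fun k => by
      rw [← Real.rpow_mul (hb k), e2, Real.rpow_one]
    have hsa' : Summable (fun k => (a k ^ (1 - 1/p)) ^ P) := by simpa only [hfa] using hsa
    have hsb' : Summable (fun k => (b k ^ (1/p)) ^ p) := by simpa only [hfb] using hsb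
    have H := Real.summable_and_inner_le_Lp_mul_Lq_tsum_of_nonneg hPQ
      (f := fun k => a k ^ (1 - 1/p)) (g := fun k => b k ^ (1/p))
      (fun k => Real.rpow_nonneg (ha k) _) (fun k => Real.rpow_nonneg (hb k) _) hsa' hsb'
    refine ⟨H.1, ?_⟩
    calc ∑' k, a k ^ (1 - 1/p) * b k ^ (1/p)
        ≤ (∑' k, (a k ^ (1 - 1/p)) ^ P) ^ (1/P) * (∑' k, (b k ^ (1/p)) ^ p) ^ (1/p) := H.2
      _ = (∑' k, a k) ^ (1 - 1/p) * (∑' k, b k) ^ (1/p) := by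
          simp only [hfa, hfb, h1P]

lemma my_log_sq_le {x p : ℝ} (hx : 1 ≤ x) (hp : 1 ≤ p) :
    Real.log x ^ 2 ≤ 4 * p ^ 2 * x ^ (1/p) := by
  have hp0 : 0 < p := lt_of_lt_of_le one_pos hp
  have hx0 : 0 < x := lt_of_lt_of_le one_pos hx
  have h1 : Real.log x = 2 * p * Real.log (x ^ (1/(2*p))) := by
    rw [Real.log_rpow hx0]; field_simp
  have h2 : Real.log (x ^ (1/(2*p))) ≤ x ^ (1/(2*p)) := by
    have := Real.log_le_sub_one_of_pos (Real.rpow_pos_of_pos hx0 (1/(2*p)))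
    linarith
  have hlog0 : 0 ≤ Real.log x := Real.log_nonneg hx
  have h3 : Real.log x ≤ 2 * p * x ^ (1/(2*p)) := by
    rw [h1]
    exact mul_le_mul_of_nonneg_left h2 (by positivity)
  have h4 : Real.log x ^ 2 ≤ (2 * p * x ^ (1/(2*p))) ^ 2 :=
    pow_le_pow_left₀ hlog0 h3 2
  calc Real.log x ^ 2 ≤ (2 * p * x ^ (1/(2*p))) ^ 2 := h4
    _ = 4 * p ^ 2 * (x ^ (1/(2*p))) ^ (2:ℕ) := by ring
    _ = 4 * p ^ 2 * x ^ (1/p) := by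
        rw [← Real.rpow_natCast (x ^ (1/(2*p))) 2, ← Real.rpow_mul (le_of_lt hx0)]
        congr 1
        field_simp
        ring

set_option maxHeartbeats 1000000 in
/-- interpolation bound ‖𝓛f‖_{L²} ≤ C p ‖f‖_{L²}^{1−1/p} ‖∂f‖_{L²}^{1/p}
    for a Fourier multiplier 𝓛 of logarithmic order. -/
theorem stmt_7 :
    ∀ C₀ : ℝ, 0 < C₀ → ∃ C : ℝ, 0 < C ∧
      ∀ p : ℝ, 1 ≤ p →
        ∀ f g Lf : AddCircle (2 * π) → ℂ,
          MemLp f 2 AddCircle.haarAddCircle →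
          MemLp g 2 AddCircle.haarAddCircle →
          MemLp Lf 2 AddCircle.haarAddCircle →
          -- g is the derivative of f, characterized on the Fourier side
          (∀ k : ℤ, fourierCoeff g k = (k : ℂ) * Complex.I * fourierCoeff f k) →
          -- 𝓛 has zero mean and logarithmic multiplier bounds
          fourierCoeff Lf 0 = 0 →
          (∀ k : ℤ, k ≠ 0 →
            ‖fourierCoeff Lf k‖ ≤ C₀ * Real.log (2 * |(k : ℝ)|) * ‖fourierCoeff f k‖) →
          eLpNorm Lf 2 AddCircle.haarAddCircle ≤
            ENNReal.ofReal (C * p) *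
              (eLpNorm f 2 AddCircle.haarAddCircle) ^ (1 - 1 / p) *
              (eLpNorm g 2 AddCircle.haarAddCircle) ^ (1 / p) := by
  intro C₀ hC₀
  refine ⟨3 * C₀, by positivity, ?_⟩
  intro p hp f g Lf hf hg hLf hgd hLf0 hLfb
  have hp0 : 0 < p := lt_of_lt_of_le one_pos hp
  have hip : 1/p ≤ 1 := by rw [div_le_one hp0]; exact hp
  have hθ1 : (0:ℝ) ≤ 1 - 1/p := by linarith
  have hθ2 : (0:ℝ) ≤ 1/p := by positivity
  obtain ⟨hsf, hpf⟩ := my_parseval hf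
  obtain ⟨hsg, hpg⟩ := my_parseval hg
  obtain ⟨hsL, hpL⟩ := my_parseval hLf
  set A := (eLpNorm f 2 AddCircle.haarAddCircle).toReal with hA
  set B := (eLpNorm g 2 AddCircle.haarAddCircle).toReal with hB
  set L := (eLpNorm Lf 2 AddCircle.haarAddCircle).toReal with hL
  have hA0 : 0 ≤ A := ENNReal.toReal_nonneg
  have hB0 : 0 ≤ B := ENNReal.toReal_nonneg
  have hL0 : 0 ≤ L := ENNReal.toReal_nonneg
  set a : ℤ → ℝ := fun k => ‖fourierCoeff f k‖ ^ 2 with ha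
  set b : ℤ → ℝ := fun k => ‖fourierCoeff g k‖ ^ 2 with hb
  have ha0 : ∀ k, 0 ≤ a k := fun k => sq_nonneg _
  have hb0 : ∀ k, 0 ≤ b k := fun k => sq_nonneg _
  have hgco : ∀ k : ℤ, b k = (k:ℝ)^2 * a k := by
    intro k
    have hnk : ‖(k:ℂ)‖ = |(k:ℝ)| := by
      rw [show ((k:ℂ)) = (((k:ℝ)):ℂ) by push_cast; ring, Complex.norm_real, Real.norm_eq_abs]
    simp only [hb, ha, hgd k, norm_mul, Complex.norm_I, mul_one, hnk, mul_pow, sq_abs]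
  -- pointwise bound
  have key : ∀ k : ℤ, ‖fourierCoeff Lf k‖ ^ 2 ≤
      8 * C₀^2 * p^2 * (a k ^ (1 - 1/p) * b k ^ (1/p)) := by
    intro k
    rcases eq_or_ne k 0 with rfl | hk
    · rw [hLf0, norm_zero]
      have : (0:ℝ) ≤ 8 * C₀^2 * p^2 * (a 0 ^ (1 - 1/p) * b 0 ^ (1/p)) := by positivity
      simpa using this
    · have hk1 : (1:ℝ) ≤ |(k:ℝ)| := by
        have := Int.one_le_abs hk
        rw [← Int.cast_abs]
        exact_mod_cast this
      have h2k : (1:ℝ) ≤ 2 * |(k:ℝ)| := by linarith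
      have hsq : ‖fourierCoeff Lf k‖ ^ 2 ≤
          C₀^2 * Real.log (2 * |(k:ℝ)|) ^ 2 * a k := by
        have := pow_le_pow_left₀ (norm_nonneg _) (hLfb k hk) 2
        calc ‖fourierCoeff Lf k‖ ^ 2
            ≤ (C₀ * Real.log (2 * |(k:ℝ)|) * ‖fourierCoeff f k‖) ^ 2 := this
          _ = C₀^2 * Real.log (2 * |(k:ℝ)|) ^ 2 * a k := by rw [ha]; ring
      have hlog := my_log_sq_le h2k hp
      have hx1 : (2 * |(k:ℝ)|) ^ (1/p) ≤ 2 * ((k:ℝ)^2) ^ (1/p) := by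
        calc (2 * |(k:ℝ)|) ^ (1/p) ≤ (2 * (k:ℝ)^2) ^ (1/p) := by
              apply Real.rpow_le_rpow (by positivity) _ hθ2
              have : |(k:ℝ)| ≤ (k:ℝ)^2 := by nlinarith [sq_abs (k:ℝ)]
              linarith
          _ = 2 ^ (1/p) * ((k:ℝ)^2) ^ (1/p) := Real.mul_rpow (by norm_num) (sq_nonneg _)
          _ ≤ 2 * ((k:ℝ)^2) ^ (1/p) := by
              apply mul_le_mul_of_nonneg_right _ (Real.rpow_nonneg (sq_nonneg _) _)
              calc (2:ℝ) ^ (1/p) ≤ 2 ^ (1:ℝ) :=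
                    Real.rpow_le_rpow_of_exponent_le one_le_two hip
                _ = 2 := Real.rpow_one 2
      have hsplit : a k = a k ^ (1 - 1/p) * a k ^ (1/p) := by
        have h := Real.rpow_add' (ha0 k) (y := 1 - 1/p) (z := 1/p) (by norm_num)
        rw [show (1 - 1/p) + 1/p = 1 by ring, Real.rpow_one] at h
        exact h
      have hcomb : ((k:ℝ)^2) ^ (1/p) * a k ^ (1/p) = b k ^ (1/p) := by
        rw [← Real.mul_rpow (sq_nonneg _) (ha0 k), ← hgco k]
      calc ‖fourierCoeff Lf k‖ ^ 2
          ≤ C₀^2 * Real.log (2 * |(k:ℝ)|) ^ 2 * a k := hsq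
        _ ≤ C₀^2 * (4 * p^2 * (2 * |(k:ℝ)|) ^ (1/p)) * a k := by
            apply mul_le_mul_of_nonneg_right _ (ha0 k)
            exact mul_le_mul_of_nonneg_left hlog (by positivity)
        _ ≤ C₀^2 * (4 * p^2 * (2 * ((k:ℝ)^2) ^ (1/p))) * a k := by
            apply mul_le_mul_of_nonneg_right _ (ha0 k)
            apply mul_le_mul_of_nonneg_left _ (by positivity)
            exact mul_le_mul_of_nonneg_left hx1 (by positivity)
        _ = 8 * C₀^2 * p^2 * (((k:ℝ)^2) ^ (1/p) * a k) := by ring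
        _ = 8 * C₀^2 * p^2 * (a k ^ (1 - 1/p) * (((k:ℝ)^2) ^ (1/p) * a k ^ (1/p))) := by
            rw [← mul_assoc (a k ^ (1 - 1/p)), mul_comm (a k ^ (1 - 1/p)) (((k:ℝ)^2) ^ (1/p)),
              mul_assoc (((k:ℝ)^2) ^ (1/p)), ← hsplit]
        _ = 8 * C₀^2 * p^2 * (a k ^ (1 - 1/p) * b k ^ (1/p)) := by rw [hcomb]
  obtain ⟨hsH, hH⟩ := my_holder ha0 hb0 hsf hsg hp
  have hsum_bound : L ^ 2 ≤ 8 * C₀^2 * p^2 * ((A^2) ^ (1 - 1/p) * (B^2) ^ (1/p)) := by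
    have t1 : ∑' k, ‖fourierCoeff Lf k‖ ^ 2 ≤
        ∑' k, 8 * C₀^2 * p^2 * (a k ^ (1 - 1/p) * b k ^ (1/p)) :=
      Summable.tsum_le_tsum key hsL (hsH.mul_left _)
    rw [tsum_mul_left] at t1
    rw [← hpL]
    calc ∑' k, ‖fourierCoeff Lf k‖ ^ 2
        ≤ 8 * C₀^2 * p^2 * ∑' k, a k ^ (1 - 1/p) * b k ^ (1/p) := t1
      _ ≤ 8 * C₀^2 * p^2 * ((∑' k, a k) ^ (1 - 1/p) * (∑' k, b k) ^ (1/p)) := by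
          apply mul_le_mul_of_nonneg_left hH (by positivity)
      _ = 8 * C₀^2 * p^2 * ((A^2) ^ (1 - 1/p) * (B^2) ^ (1/p)) := by
          rw [ha, hb]
          rw [show (∑' k, ‖fourierCoeff f k‖ ^ 2) = A^2 from hpf,
            show (∑' k, ‖fourierCoeff g k‖ ^ 2) = B^2 from hpg]
  have hA2 : (A^2) ^ (1 - 1/p) = (A ^ (1 - 1/p))^2 := by
    rw [← Real.rpow_natCast A 2, ← Real.rpow_mul hA0, mul_comm, Real.rpow_mul hA0,
      Real.rpow_natCast]
  have hB2 : (B^2) ^ (1/p) = (B ^ (1/p))^2 := by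
    rw [← Real.rpow_natCast B 2, ← Real.rpow_mul hB0, mul_comm, Real.rpow_mul hB0,
      Real.rpow_natCast]
  have hreal : L ≤ 3 * C₀ * p * (A ^ (1 - 1/p) * B ^ (1/p)) := by
    have hR0 : 0 ≤ 3 * C₀ * p * (A ^ (1 - 1/p) * B ^ (1/p)) := by positivity
    have hsq : L^2 ≤ (3 * C₀ * p * (A ^ (1 - 1/p) * B ^ (1/p)))^2 := by
      rw [hA2, hB2] at hsum_bound
      calc L^2 ≤ 8 * C₀^2 * p^2 * ((A ^ (1 - 1/p))^2 * (B ^ (1/p))^2) := hsum_bound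
        _ ≤ 9 * C₀^2 * p^2 * ((A ^ (1 - 1/p))^2 * (B ^ (1/p))^2) := by
            have h9 : (8:ℝ) * C₀^2 * p^2 ≤ 9 * C₀^2 * p^2 := by nlinarith [sq_nonneg C₀, sq_nonneg p, mul_nonneg (sq_nonneg C₀) (sq_nonneg p)]
            exact mul_le_mul_of_nonneg_right h9 (by positivity)
        _ = (3 * C₀ * p * (A ^ (1 - 1/p) * B ^ (1/p)))^2 := by ring
    exact (pow_le_pow_iff_left₀ hL0 hR0 (by norm_num)).1 hsq
  -- convert to ENNReal
  have hfe : eLpNorm f 2 AddCircle.haarAddCircle = ENNReal.ofReal A :=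
    (ENNReal.ofReal_toReal hf.2.ne).symm
  have hge : eLpNorm g 2 AddCircle.haarAddCircle = ENNReal.ofReal B :=
    (ENNReal.ofReal_toReal hg.2.ne).symm
  have hLe : eLpNorm Lf 2 AddCircle.haarAddCircle = ENNReal.ofReal L :=
    (ENNReal.ofReal_toReal hLf.2.ne).symm
  rw [hfe, hge, hLe,
    ENNReal.ofReal_rpow_of_nonneg hA0 hθ1, ENNReal.ofReal_rpow_of_nonneg hB0 hθ2,
    ← ENNReal.ofReal_mul (by positivity), ← ENNReal.ofReal_mul (by positivity)]
  apply ENNReal.ofReal_le_ofReal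
  calc L ≤ 3 * C₀ * p * (A ^ (1 - 1/p) * B ^ (1/p)) := hreal
    _ = 3 * C₀ * p * A ^ (1 - 1/p) * B ^ (1/p) := by ring
end

section
/- Let z : [0,T] → [0,∞) be a continuously differentiable function with z(0) = 0 and suppose there is a constant C > 0 such that for every p ≥ 1, z'(t) ≤ C p z(t)^{1−1/p} for all t ∈ [0,T]. Then z(t) = 0 for all t ∈ [0, min(T, 1/(2C))]. -/
open Real Set

/-- Osgood-type uniqueness from the family of differential inequalities
    z'(t) ≤ C p z(t)^{1-1/p} for all p ≥ 1, with z(0) = 0. -/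
theorem stmt_9 (T C : ℝ) (hT : 0 < T) (hC : 0 < C)
    (z z' : ℝ → ℝ)
    (hz0 : z 0 = 0)
    (hznn : ∀ t ∈ Icc (0 : ℝ) T, 0 ≤ z t)
    (hderiv : ∀ t ∈ Icc (0 : ℝ) T, HasDerivAt z (z' t) t)
    (hz'cont : ContinuousOn z' (Icc (0 : ℝ) T))
    (hineq : ∀ p : ℝ, 1 ≤ p → ∀ t ∈ Icc (0 : ℝ) T, z' t ≤ C * p * z t ^ (1 - 1 / p)) :
    ∀ t ∈ Icc (0 : ℝ) (min T (1 / (2 * C))), z t = 0 := by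
  intro t ht
  obtain ⟨ht0, htm⟩ := ht
  have htT : t ≤ T := le_trans htm (min_le_left _ _)
  have htmem : t ∈ Icc (0:ℝ) T := ⟨ht0, htT⟩
  have htC : C * t ≤ 1/2 := by
    have h1 : t ≤ 1 / (2 * C) := le_trans htm (min_le_right _ _)
    calc C * t ≤ C * (1 / (2 * C)) := by
          exact mul_le_mul_of_nonneg_left h1 hC.le
      _ = 1/2 := by field_simp
  -- Key bound: for every real p ≥ 1, z t ≤ (3/4)^p
  have key : ∀ p : ℝ, 1 ≤ p → z t ≤ (3/4 : ℝ) ^ p := by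
    intro p hp
    have hp0 : (0:ℝ) < p := lt_of_lt_of_le one_pos hp
    set c : ℝ := 1 / p with hc
    have hc0 : 0 < c := by positivity
    have hc1 : c ≤ 1 := by
      rw [hc]; rw [div_le_one hp0]; exact hp
    set E : ℝ := (1/4 : ℝ) ^ p with hE
    have hEpos : 0 < E := Real.rpow_pos_of_pos (by norm_num) p
    set f : ℝ → ℝ := fun s => z s + E with hf
    have hfpos : ∀ s ∈ Icc (0:ℝ) T, 0 < f s := fun s hs =>
      add_pos_of_nonneg_of_pos (hznn s hs) hEpos
    set w : ℝ → ℝ := fun s => f s ^ c with hw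
    have hwd : ∀ s ∈ Icc (0:ℝ) T,
        HasDerivAt w (z' s * c * f s ^ (c - 1)) s := by
      intro s hs
      exact ((hderiv s hs).add_const E).rpow_const (Or.inl (hfpos s hs).ne')
    -- derivative bound
    have hbound : ∀ s ∈ Icc (0:ℝ) T, z' s * c * f s ^ (c - 1) ≤ C := by
      intro s hs
      have hfp := hfpos s hs
      have hfcpos : 0 < f s ^ (c - 1) := Real.rpow_pos_of_pos hfp _
      rcases le_or_gt (z' s) 0 with hz' | hz'
      · have : z' s * c * f s ^ (c - 1) ≤ 0 :=
          mul_nonpos_of_nonpos_of_nonneg (mul_nonpos_of_nonpos_of_nonneg hz' hc0.le) hfcpos.le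
        linarith
      · have h1 : z' s ≤ C * p * z s ^ (1 - c) := by
          have := hineq p hp s hs
          rwa [hc]
        have h2 : z s ^ (1 - c) ≤ f s ^ (1 - c) := by
          apply Real.rpow_le_rpow (hznn s hs) _ (by linarith)
          simp [hf]; linarith
        have h3 : z' s ≤ C * p * f s ^ (1 - c) := by
          calc z' s ≤ C * p * z s ^ (1 - c) := h1
            _ ≤ C * p * f s ^ (1 - c) := by
                apply mul_le_mul_of_nonneg_left h2 (by positivity)
        have h4 : f s ^ (1 - c) * f s ^ (c - 1) = 1 := by
          rw [← Real.rpow_add hfp]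
          norm_num
        have h5 : p * c = 1 := by
          rw [hc]; field_simp
        calc z' s * c * f s ^ (c - 1)
            ≤ (C * p * f s ^ (1 - c)) * c * f s ^ (c - 1) := by
              apply mul_le_mul_of_nonneg_right _ hfcpos.le
              exact mul_le_mul_of_nonneg_right h3 hc0.le
          _ = C * (p * c) * (f s ^ (1 - c) * f s ^ (c - 1)) := by ring
          _ = C := by rw [h4, h5]; ring
    -- the auxiliary function g
    set g : ℝ → ℝ := fun s => C * s + 1/4 - w s with hg
    have hsub : Icc (0:ℝ) t ⊆ Icc (0:ℝ) T := Icc_subset_Icc le_rfl htT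
    have hgc : ContinuousOn g (Icc (0:ℝ) t) := by
      apply ContinuousOn.sub
      · fun_prop
      · intro s hs
        exact (hwd s (hsub hs)).continuousAt.continuousWithinAt
    have hgd : ∀ s ∈ interior (Icc (0:ℝ) t),
        HasDerivAt g (C - z' s * c * f s ^ (c - 1)) s := by
      intro s hs
      have hs' : s ∈ Icc (0:ℝ) T := hsub (interior_subset hs)
      have h1 : HasDerivAt (fun s => C * s + 1/4) C s := by
        simpa using ((hasDerivAt_id s).const_mul C).add_const (1/4 : ℝ)
      exact h1.sub (hwd s hs')
    have hmono : MonotoneOn g (Icc (0:ℝ) t) := by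
      apply monotoneOn_of_deriv_nonneg (convex_Icc _ _) hgc
      · intro s hs
        exact (hgd s hs).differentiableAt.differentiableWithinAt
      · intro s hs
        rw [(hgd s hs).deriv]
        have := hbound s (hsub (interior_subset hs))
        linarith
    have hg0 : g 0 = 0 := by
      have hw0 : w 0 = 1/4 := by
        simp only [hw, hf, hz0, zero_add, hE]
        rw [← Real.rpow_mul (by norm_num : (0:ℝ) ≤ 1/4)]
        rw [hc, mul_one_div_cancel hp0.ne', Real.rpow_one]
      simp [hg, hw0]
    have hgt : 0 ≤ g t := by
      rw [← hg0]
      exact hmono ⟨le_rfl, ht0⟩ ⟨ht0, le_rfl⟩ ht0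
    have hwt : w t ≤ 3/4 := by
      have : w t ≤ C * t + 1/4 := by simp only [hg] at hgt; linarith
      linarith
    have hwnn : 0 ≤ w t := (Real.rpow_pos_of_pos (hfpos t htmem) _).le
    have hft : f t = w t ^ p := by
      rw [hw, ← Real.rpow_mul (hfpos t htmem).le]
      rw [hc, one_div_mul_cancel hp0.ne', Real.rpow_one]
    calc z t ≤ f t := by simp [hf]; linarith
      _ = w t ^ p := hft
      _ ≤ (3/4 : ℝ) ^ p := Real.rpow_le_rpow hwnn hwt hp0.le
  -- take p → ∞
  have htend : Filter.Tendsto (fun n : ℕ => ((3:ℝ)/4) ^ (n : ℝ)) Filter.atTop (nhds 0) := by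
    simpa [Real.rpow_natCast] using
      tendsto_pow_atTop_nhds_zero_of_lt_one (by norm_num : (0:ℝ) ≤ 3/4) (by norm_num : (3:ℝ)/4 < 1)
  have hle : z t ≤ 0 := by
    apply ge_of_tendsto htend
    filter_upwards [Filter.eventually_ge_atTop 1] with n hn
    exact key n (by exact_mod_cast hn)
  exact le_antisymm hle (hznn t htmem)
end

section
/- Let x : 𝕋 → ℝ² be a C^{2,δ} curve with ∂_γ x(γ) · ∂²_γ x(γ) = 0 for all γ. Then for all γ, η, |(x(γ) − x(γ−η)) · (∂_γ x(γ) − ∂_γ x(γ−η))| ≤ 2‖x‖²_{C^{2,δ}} |η|^{2+δ}. -/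
open Real

/-- Hölder estimate for (x(γ)−x(γ−η))·(∂x(γ)−∂x(γ−η)) when ∂x ⟂ ∂²x. -/
theorem stmt_11 (x : ℝ → EuclideanSpace ℝ (Fin 2)) (δ : ℝ) (hδ : 0 < δ) (hδ1 : δ < 1)
    (hx : ContDiff ℝ 2 x) (hper : Function.Periodic x (2 * π))
    (horth : ∀ γ : ℝ, inner ℝ (deriv x γ) (iteratedDeriv 2 x γ) = (0 : ℝ))
    (M : ℝ)
    (hM0 : ∀ γ : ℝ, ‖x γ‖ ≤ M) (hM1 : ∀ γ : ℝ, ‖deriv x γ‖ ≤ M)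
    (hM2 : ∀ γ : ℝ, ‖iteratedDeriv 2 x γ‖ ≤ M)
    (hHol : ∀ a b : ℝ, ‖iteratedDeriv 2 x a - iteratedDeriv 2 x b‖ ≤ M * |a - b| ^ δ) :
    ∀ γ η : ℝ, |η| ≤ π →
      |(inner ℝ (x γ - x (γ - η)) (deriv x γ - deriv x (γ - η)) : ℝ)| ≤
        2 * M ^ 2 * |η| ^ (2 + δ) := by
  have hM : 0 ≤ M := le_trans (norm_nonneg _) (hM0 0)
  -- basic regularity facts
  have hx' : ContDiff ℝ ((1 : ℕ) + 1) x := by norm_num; exact_mod_cast hx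
  have hxd : Differentiable ℝ x := (contDiff_succ_iff_deriv.mp hx').1
  have hd1 : ContDiff ℝ 1 (deriv x) := (contDiff_succ_iff_deriv.mp hx').2.2
  have hdd : Differentiable ℝ (deriv x) := hd1.differentiable one_ne_zero
  have hit2 : iteratedDeriv 2 x = deriv (deriv x) := by
    simp [iteratedDeriv_succ, iteratedDeriv_zero]
  -- constant speed
  have hspeed : ∀ a b : ℝ, ‖deriv x a‖ = ‖deriv x b‖ := by
    intro a b
    have hdiff : Differentiable ℝ (fun t => (inner ℝ (deriv x t) (deriv x t) : ℝ)) :=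
      fun t => ((hdd t).hasDerivAt.inner ℝ (hdd t).hasDerivAt).differentiableAt
    have hzero : ∀ t, deriv (fun t => (inner ℝ (deriv x t) (deriv x t) : ℝ)) t = 0 := by
      intro t
      rw [((hdd t).hasDerivAt.inner ℝ (hdd t).hasDerivAt).deriv]
      have h0 := horth t
      rw [hit2] at h0
      have hc : (inner ℝ (deriv (deriv x) t) (deriv x t) : ℝ)
          = inner ℝ (deriv x t) (deriv (deriv x) t) := real_inner_comm _ _
      rw [hc, h0]; ring
    have hconst := is_const_of_deriv_eq_zero hdiff hzero a b
    have ha : ‖deriv x a‖ ^ 2 = ‖deriv x b‖ ^ 2 := by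
      rw [← real_inner_self_eq_norm_sq, ← real_inner_self_eq_norm_sq]
      exact hconst
    nlinarith [norm_nonneg (deriv x a), norm_nonneg (deriv x b)]
  -- Lipschitz bound on deriv x
  have hLip : ∀ a b : ℝ, ‖deriv x a - deriv x b‖ ≤ M * |a - b| := by
    intro a b
    have := (convex_univ : Convex ℝ (Set.univ : Set ℝ)).norm_image_sub_le_of_norm_deriv_le
      (f := deriv x) (fun t _ => hdd t)
      (fun t _ => by rw [← hit2]; exact hM2 t) (Set.mem_univ b) (Set.mem_univ a)
    simpa [Real.norm_eq_abs] using this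
  intro γ η hη
  set B := deriv x γ - deriv x (γ - η) with hB
  -- FTC
  have hint : IntervalIntegrable (deriv x) MeasureTheory.volume (γ - η) γ :=
    (hd1.continuous).intervalIntegrable _ _
  have hFTC : ∫ t in (γ - η)..γ, deriv x t = x γ - x (γ - η) := by
    apply intervalIntegral.integral_deriv_eq_sub (fun t _ => hxd t) hint
  -- move inner inside the integral
  have hinner : (inner ℝ (x γ - x (γ - η)) B : ℝ)
      = ∫ t in (γ - η)..γ, (inner ℝ (deriv x t) B : ℝ) := by
    have h := (innerSL ℝ B).intervalIntegral_comp_comm hint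
    rw [hFTC] at h
    simp only [innerSL_apply_apply] at h
    rw [real_inner_comm, ← h]
    congr 1
    funext t
    exact real_inner_comm _ _
  -- pointwise bound
  have hpt : ∀ t ∈ Set.uIoc (γ - η) γ, ‖(inner ℝ (deriv x t) B : ℝ)‖ ≤ M ^ 2 * η ^ 2 / 2 := by
    intro t ht
    have hea : -|η| ≤ η := neg_abs_le η
    have heb : η ≤ |η| := le_abs_self η
    have ht1 : |γ - t| ≤ |η| := by
      rcases Set.mem_uIoc.mp ht with ⟨h1, h2⟩ | ⟨h1, h2⟩ <;>
        · rw [abs_le]; constructor <;> linarith [abs_nonneg η]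
    have ht2 : |γ - η - t| ≤ |η| := by
      rcases Set.mem_uIoc.mp ht with ⟨h1, h2⟩ | ⟨h1, h2⟩ <;>
        · rw [abs_le]; constructor <;> linarith [abs_nonneg η]
    have key : (inner ℝ (deriv x t) B : ℝ)
        = (‖deriv x (γ - η) - deriv x t‖ ^ 2 - ‖deriv x γ - deriv x t‖ ^ 2) / 2 := by
      have e1 : ‖deriv x γ - deriv x t‖ ^ 2
          = ‖deriv x γ‖ ^ 2 - 2 * inner ℝ (deriv x γ) (deriv x t) + ‖deriv x t‖ ^ 2 :=
        norm_sub_sq_real _ _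
      have e2 : ‖deriv x (γ - η) - deriv x t‖ ^ 2
          = ‖deriv x (γ - η)‖ ^ 2 - 2 * inner ℝ (deriv x (γ - η)) (deriv x t) + ‖deriv x t‖ ^ 2 :=
        norm_sub_sq_real _ _
      have e3 : ‖deriv x γ‖ = ‖deriv x (γ - η)‖ := hspeed _ _
      have e4 : (inner ℝ (deriv x t) B : ℝ)
          = inner ℝ (deriv x γ) (deriv x t) - inner ℝ (deriv x (γ - η)) (deriv x t) := by
        rw [hB, real_inner_comm, inner_sub_left]
      rw [e3] at e1
      rw [e4]
      linarith
    have b1 : ‖deriv x γ - deriv x t‖ ≤ M * |η| :=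
      le_trans (hLip _ _) (mul_le_mul_of_nonneg_left ht1 hM)
    have b2 : ‖deriv x (γ - η) - deriv x t‖ ≤ M * |η| :=
      le_trans (hLip _ _) (mul_le_mul_of_nonneg_left ht2 hM)
    have h1 := norm_nonneg (deriv x γ - deriv x t)
    have h2 := norm_nonneg (deriv x (γ - η) - deriv x t)
    have hMη : (0:ℝ) ≤ M * |η| := by positivity
    have hsq : (M * |η|) ^ 2 = M ^ 2 * η ^ 2 := by rw [mul_pow, sq_abs]
    rw [key, Real.norm_eq_abs]
    rw [abs_div, abs_of_nonneg (by norm_num : (0:ℝ) ≤ 2), div_le_div_iff₀ (by norm_num) (by norm_num)]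
    have q1 : ‖deriv x γ - deriv x t‖ ^ 2 ≤ M ^ 2 * η ^ 2 := by
      rw [← hsq]; exact pow_le_pow_left₀ h1 b1 2
    have q2 : ‖deriv x (γ - η) - deriv x t‖ ^ 2 ≤ M ^ 2 * η ^ 2 := by
      rw [← hsq]; exact pow_le_pow_left₀ h2 b2 2
    have q3 : (0:ℝ) ≤ ‖deriv x γ - deriv x t‖ ^ 2 := sq_nonneg _
    have q4 : (0:ℝ) ≤ ‖deriv x (γ - η) - deriv x t‖ ^ 2 := sq_nonneg _
    have habs : |‖deriv x (γ - η) - deriv x t‖ ^ 2 - ‖deriv x γ - deriv x t‖ ^ 2|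
        ≤ M ^ 2 * η ^ 2 := abs_le.mpr ⟨by linarith, by linarith⟩
    nlinarith
  -- integral bound
  have hbound : |(inner ℝ (x γ - x (γ - η)) B : ℝ)| ≤ M ^ 2 * η ^ 2 / 2 * |η| := by
    rw [hinner]
    have h := intervalIntegral.norm_integral_le_of_norm_le_const hpt
    have he : |γ - (γ - η)| = |η| := by congr 1; ring
    rw [he] at h
    simpa [Real.norm_eq_abs] using h
  -- final comparison
  have hfin : M ^ 2 * η ^ 2 / 2 * |η| ≤ 2 * M ^ 2 * |η| ^ (2 + δ) := by
    rcases eq_or_ne η 0 with rfl | hne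
    · simp only [abs_zero]
      rw [Real.zero_rpow (by positivity : (0:ℝ) < 2 + δ).ne']
      simp
    · have hpos : 0 < |η| := abs_pos.mpr hne
      have h3 : M ^ 2 * η ^ 2 / 2 * |η| = M ^ 2 / 2 * |η| ^ ((3 : ℕ) : ℝ) := by
        rw [Real.rpow_natCast]
        have hη2 : η ^ 2 = |η| ^ 2 := (sq_abs η).symm
        rw [hη2]; ring
      rw [h3]
      have hsplit : |η| ^ ((3 : ℕ) : ℝ) = |η| ^ (2 + δ) * |η| ^ (1 - δ) := by
        rw [← Real.rpow_add hpos]; norm_num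
      rw [hsplit]
      have h4 : |η| ^ (1 - δ) ≤ 4 := by
        calc |η| ^ (1 - δ) ≤ π ^ (1 - δ) :=
            Real.rpow_le_rpow (abs_nonneg _) hη (by linarith)
          _ ≤ π ^ (1 : ℝ) :=
            Real.rpow_le_rpow_of_exponent_le (by linarith [Real.pi_gt_three]) (by linarith)
          _ = π := Real.rpow_one _
          _ ≤ 4 := by linarith [Real.pi_lt_d2]
      have h5 : 0 ≤ |η| ^ (2 + δ) := Real.rpow_nonneg (abs_nonneg _) _
      calc M ^ 2 / 2 * (|η| ^ (2 + δ) * |η| ^ (1 - δ))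
          ≤ M ^ 2 / 2 * (|η| ^ (2 + δ) * 4) := by
            apply mul_le_mul_of_nonneg_left _ (by positivity)
            exact mul_le_mul_of_nonneg_left h4 h5
        _ = 2 * M ^ 2 * |η| ^ (2 + δ) := by ring
  exact le_trans hbound hfin
end

section
/- Let x : 𝕋 → ℝ² be a C^{2,δ} curve satisfying the arc-chord condition F(x)(γ,η) = |η|/|x(γ)−x(γ−η)| ≤ M, with ∂_γ x · ∂²_γ x ≡ 0. Then for all γ and η ≠ 0, |(x(γ)−x(γ−η)) · (∂_γ x(γ)−∂_γ x(γ−η))| / |x(γ)−x(γ−η)|³ ≤ 2 M³ ‖x‖²_{C^{2,1/2}} |η|^{−1/2}. -/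
open Real

/-- arc-chord weighted estimate for the kernel
    (x_- · ∂x_-)/|x_-|³ for a constant-speed C^{2,1/2} curve. -/
theorem stmt_12 (x : ℝ → EuclideanSpace ℝ (Fin 2))
    (hx : ContDiff ℝ 2 x) (hper : Function.Periodic x (2 * π))
    (horth : ∀ γ : ℝ, inner ℝ (deriv x γ) (iteratedDeriv 2 x γ) = (0 : ℝ))
    (M : ℝ) (hM : 0 < M)
    (harcchord : ∀ γ η : ℝ, |η| ≤ π → |η| ≤ M * ‖x γ - x (γ - η)‖)
    (N : ℝ)
    (hN0 : ∀ γ : ℝ, ‖x γ‖ ≤ N) (hN1 : ∀ γ : ℝ, ‖deriv x γ‖ ≤ N)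
    (hN2 : ∀ γ : ℝ, ‖iteratedDeriv 2 x γ‖ ≤ N)
    (hHol : ∀ a b : ℝ, ‖iteratedDeriv 2 x a - iteratedDeriv 2 x b‖ ≤ N * |a - b| ^ (1/2 : ℝ)) :
    ∀ γ η : ℝ, η ≠ 0 → |η| ≤ π →
      |(inner ℝ (x γ - x (γ - η)) (deriv x γ - deriv x (γ - η)) : ℝ)| /
          ‖x γ - x (γ - η)‖ ^ 3 ≤
        2 * M ^ 3 * N ^ 2 * |η| ^ (-(1/2) : ℝ) := by
  have hN : 0 ≤ N := le_trans (norm_nonneg _) (hN0 0)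
  have hdx : Differentiable ℝ x := hx.differentiable (by norm_num)
  have hcd2 : ContDiff ℝ 1 (deriv x) :=
    ((contDiff_succ_iff_deriv (n := 1)).mp (by exact_mod_cast hx)).2.2
  have hddx : Differentiable ℝ (deriv x) := hcd2.differentiable one_ne_zero
  have hd2 : deriv (deriv x) = iteratedDeriv 2 x := by
    rw [iteratedDeriv_succ, iteratedDeriv_one]
  have hcont1 : Continuous (deriv x) := hcd2.continuous
  have hcont2 : Continuous (deriv (deriv x)) := hcd2.continuous_deriv le_rfl
  -- Lipschitz estimate for deriv x
  have lip : ∀ s t : ℝ, ‖deriv x t - deriv x s‖ ≤ N * |t - s| := by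
    intro s t
    have h1 : deriv x t - deriv x s = ∫ u in s..t, deriv (deriv x) u :=
      (intervalIntegral.integral_deriv_eq_sub (fun u _ => hddx u)
        (hcont2.intervalIntegrable s t)).symm
    rw [h1]
    exact intervalIntegral.norm_integral_le_of_norm_le_const
      (fun u _ => by rw [hd2]; exact hN2 u)
  -- key second-order estimate on ordered pairs
  have key : ∀ p q : ℝ, p ≤ q →
      |(inner ℝ (x q - x p) (deriv x q - deriv x p) : ℝ)| ≤
        N^2 * ((q - p)^2 * (q - p) ^ ((1:ℝ)/2)) + N^2/2 * (q - p)^3 := by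
    intro p q hpq
    have hh0 : (0:ℝ) ≤ q - p := by linarith
    set v := deriv x p with hv
    set w := iteratedDeriv 2 x p with hw
    -- first remainder
    have hr1 : ‖x q - x p - (q - p) • v‖ ≤ N/2 * (q - p)^2 := by
      have hify : x q - x p = ∫ t in p..q, deriv x t :=
        (intervalIntegral.integral_deriv_eq_sub (fun t _ => hdx t)
          (hcont1.intervalIntegrable p q)).symm
      have hconst : (q - p) • v = ∫ t in p..q, v := by
        rw [intervalIntegral.integral_const]
      rw [hify, hconst, ← intervalIntegral.integral_sub
        (hcont1.intervalIntegrable p q) (intervalIntegrable_const)]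
      calc ‖∫ t in p..q, (deriv x t - v)‖
          ≤ ∫ t in p..q, ‖deriv x t - v‖ :=
            intervalIntegral.norm_integral_le_integral_norm hpq
        _ ≤ ∫ t in p..q, N * (t - p) := by
            apply intervalIntegral.integral_mono_on hpq
            · exact ((hcont1.sub continuous_const).norm).intervalIntegrable p q
            · exact (continuous_const.mul (continuous_id.sub continuous_const)).intervalIntegrable p q
            · intro t ht
              have h2 := lip p t
              rwa [abs_of_nonneg (by linarith [ht.1])] at h2
        _ = N * ((q - p)^2 / 2) := by
            rw [intervalIntegral.integral_const_mul]
            congr 1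
            rw [intervalIntegral.integral_sub (f := fun t : ℝ => t)
              (continuous_id.intervalIntegrable p q)
              intervalIntegrable_const, integral_id, intervalIntegral.integral_const,
              smul_eq_mul]
            ring
        _ = N/2 * (q - p)^2 := by ring
    -- second remainder
    have hr2 : ‖deriv x q - deriv x p - (q - p) • w‖ ≤ N * (q - p) ^ ((1:ℝ)/2) * (q - p) := by
      have hify : deriv x q - deriv x p = ∫ t in p..q, deriv (deriv x) t :=
        (intervalIntegral.integral_deriv_eq_sub (fun t _ => hddx t)
          (hcont2.intervalIntegrable p q)).symm
      have hconst : (q - p) • w = ∫ t in p..q, w := by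
        rw [intervalIntegral.integral_const]
      rw [hify, hconst, ← intervalIntegral.integral_sub
        (hcont2.intervalIntegrable p q) (intervalIntegrable_const)]
      have hb := intervalIntegral.norm_integral_le_of_norm_le_const
        (C := N * (q - p) ^ ((1:ℝ)/2)) (f := fun t => deriv (deriv x) t - w)
        (a := p) (b := q) ?_
      · rw [abs_of_nonneg hh0] at hb
        exact hb
      · intro t ht
        rw [Set.uIoc_of_le hpq] at ht
        rw [hd2]
        calc ‖iteratedDeriv 2 x t - w‖ ≤ N * |t - p| ^ ((1:ℝ)/2) := by
              have := hHol t p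
              norm_num at this ⊢
              exact this
          _ ≤ N * (q - p) ^ ((1:ℝ)/2) := by
              apply mul_le_mul_of_nonneg_left _ hN
              apply Real.rpow_le_rpow (abs_nonneg _) _ (by norm_num)
              rw [abs_of_nonneg (by linarith [ht.1])]
              linarith [ht.2]
    have lipD : ‖deriv x q - deriv x p‖ ≤ N * (q - p) := by
      have h2 := lip p q
      rwa [abs_of_nonneg hh0] at h2
    have ho : (inner ℝ v w : ℝ) = 0 := horth p
    have hexp : (inner ℝ (x q - x p) (deriv x q - deriv x p) : ℝ)
        = (q - p) * (inner ℝ v (deriv x q - deriv x p - (q - p) • w) : ℝ)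
          + (inner ℝ (x q - x p - (q - p) • v) (deriv x q - deriv x p) : ℝ) := by
      simp only [inner_sub_left, inner_sub_right, real_inner_smul_left,
        real_inner_smul_right, ho]
      ring
    have hb1 : |(q - p) * (inner ℝ v (deriv x q - deriv x p - (q - p) • w) : ℝ)|
        ≤ (q - p) * (N * (N * (q - p) ^ ((1:ℝ)/2) * (q - p))) := by
      rw [abs_mul, abs_of_nonneg hh0]
      gcongr
      calc |(inner ℝ v (deriv x q - deriv x p - (q - p) • w) : ℝ)|
          ≤ ‖v‖ * ‖deriv x q - deriv x p - (q - p) • w‖ := abs_real_inner_le_norm _ _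
        _ ≤ N * (N * (q - p) ^ ((1:ℝ)/2) * (q - p)) := by
            apply mul_le_mul (hN1 p) hr2 (norm_nonneg _) hN
    have hb2 : |(inner ℝ (x q - x p - (q - p) • v) (deriv x q - deriv x p) : ℝ)|
        ≤ (N/2 * (q - p)^2) * (N * (q - p)) := by
      calc |(inner ℝ (x q - x p - (q - p) • v) (deriv x q - deriv x p) : ℝ)|
          ≤ ‖x q - x p - (q - p) • v‖ * ‖deriv x q - deriv x p‖ := abs_real_inner_le_norm _ _
        _ ≤ (N/2 * (q - p)^2) * (N * (q - p)) :=
            mul_le_mul hr1 lipD (norm_nonneg _) (by positivity)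
    calc |(inner ℝ (x q - x p) (deriv x q - deriv x p) : ℝ)|
        ≤ |(q - p) * (inner ℝ v (deriv x q - deriv x p - (q - p) • w) : ℝ)|
          + |(inner ℝ (x q - x p - (q - p) • v) (deriv x q - deriv x p) : ℝ)| := by
          rw [hexp]; exact abs_add_le _ _
      _ ≤ (q - p) * (N * (N * (q - p) ^ ((1:ℝ)/2) * (q - p)))
          + (N/2 * (q - p)^2) * (N * (q - p)) := add_le_add hb1 hb2
      _ = N^2 * ((q - p)^2 * (q - p) ^ ((1:ℝ)/2)) + N^2/2 * (q - p)^3 := by ring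
  -- main proof
  intro γ η hη hηπ
  set t := |η| with htdef
  have ht0 : 0 < t := abs_pos.mpr hη
  -- numerator bound
  have hnum : |(inner ℝ (x γ - x (γ - η)) (deriv x γ - deriv x (γ - η)) : ℝ)| ≤
      N^2 * (t^2 * t ^ ((1:ℝ)/2)) + N^2/2 * t^3 := by
    rcases le_or_gt 0 η with hs | hs
    · have h := key (γ - η) γ (by linarith)
      rw [show γ - (γ - η) = η by ring] at h
      have hteq : t = η := abs_of_nonneg hs
      rw [hteq]
      exact h
    · have h := key γ (γ - η) (by linarith)
      rw [show (γ - η) - γ = -η by ring] at h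
      have he1 : x (γ - η) - x γ = -(x γ - x (γ - η)) := by abel
      have he2 : deriv x (γ - η) - deriv x γ = -(deriv x γ - deriv x (γ - η)) := by abel
      rw [he1, he2, inner_neg_neg] at h
      have hteq : t = -η := abs_of_neg hs
      rw [hteq]
      exact h
  -- combine the two numerator terms
  have hts : t ^ ((1:ℝ)/2) ≤ 2 := by
    have h4 : ((4:ℝ)) ^ ((1:ℝ)/2) = 2 := by
      rw [show (4:ℝ) = 2^(2:ℕ) by norm_num, ← Real.rpow_natCast 2 2,
        ← Real.rpow_mul (by norm_num : (0:ℝ) ≤ 2)]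
      norm_num
    calc t ^ ((1:ℝ)/2) ≤ (4:ℝ) ^ ((1:ℝ)/2) :=
          Real.rpow_le_rpow ht0.le (le_trans hηπ pi_le_four) (by norm_num)
      _ = 2 := h4
  have htt : t ≤ 2 * t ^ ((1:ℝ)/2) := by
    have h1 : t = t ^ ((1:ℝ)/2) * t ^ ((1:ℝ)/2) := by
      rw [← Real.rpow_add ht0]; norm_num
    nlinarith [Real.rpow_nonneg ht0.le ((1:ℝ)/2)]
  have hnum2 : |(inner ℝ (x γ - x (γ - η)) (deriv x γ - deriv x (γ - η)) : ℝ)| ≤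
      2 * N^2 * (t^2 * t ^ ((1:ℝ)/2)) := by
    refine le_trans hnum ?_
    nlinarith [mul_le_mul_of_nonneg_left htt (mul_nonneg (by positivity : (0:ℝ) ≤ N^2/2) (sq_nonneg t)), sq_nonneg N, sq_nonneg t, Real.rpow_nonneg ht0.le ((1:ℝ)/2)]
  -- denominator bound
  have hden : t / M ≤ ‖x γ - x (γ - η)‖ := by
    rw [div_le_iff₀ hM]
    rw [mul_comm]
    exact harcchord γ η hηπ
  have hden3 : t^3 / M^3 ≤ ‖x γ - x (γ - η)‖ ^ 3 := by
    calc t^3 / M^3 = (t / M)^3 := by rw [div_pow]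
      _ ≤ ‖x γ - x (γ - η)‖ ^ 3 := by
          apply pow_le_pow_left₀ (by positivity) hden
  have hfinal : |(inner ℝ (x γ - x (γ - η)) (deriv x γ - deriv x (γ - η)) : ℝ)| /
      ‖x γ - x (γ - η)‖ ^ 3 ≤ (2 * N^2 * (t^2 * t ^ ((1:ℝ)/2))) / (t^3 / M^3) :=
    div_le_div₀ (by positivity) hnum2 (by positivity) hden3
  refine le_trans hfinal ?_
  have hid : t^2 * t ^ ((1:ℝ)/2) = t ^ (-(1/2):ℝ) * t^3 := by
    rw [← Real.rpow_natCast t 2, ← Real.rpow_natCast t 3, ← Real.rpow_add ht0,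
      ← Real.rpow_add ht0]
    norm_num
  have htne : t ≠ 0 := ne_of_gt ht0
  have hMne : M ≠ 0 := ne_of_gt hM
  have heq : (2 * N^2 * (t^2 * t ^ ((1:ℝ)/2))) / (t^3 / M^3)
      = 2 * M ^ 3 * N ^ 2 * t ^ (-(1/2) : ℝ) := by
    rw [hid]
    field_simp
  exact le_of_eq heq
end

section
/- Let x : 𝕋 → ℝ² be C³ with |∂_γ x| constant in γ (so ∂_γ x · ∂²_γ x ≡ 0 and ∂_γ x · ∂³_γ x = −|∂²_γ x|²). Then |(∂_γ x(γ) − ∂_γ x(γ−η) − ∂²_γ x(γ) η + (1/2)∂³_γ x(γ) η²) · ∂_γ x(γ)| ≤ 2 |η|³ ‖x‖_{C²} ∫₀¹ |∂³_γ x(γ + (r−1)η)| dr. -/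
open Real MeasureTheory intervalIntegral

/-- bound on the tangential component of the Taylor remainder of ∂_γ x
    for a constant-speed periodic curve. -/
theorem stmt_15 (x : ℝ → EuclideanSpace ℝ (Fin 2))
    (hx : ContDiff ℝ 3 x) (hper : Function.Periodic x (2 * π))
    (c : ℝ) (hspeed : ∀ γ : ℝ, ‖deriv x γ‖ = c)
    (M : ℝ) (hM0 : ∀ γ : ℝ, ‖x γ‖ ≤ M) (hM1 : ∀ γ : ℝ, ‖deriv x γ‖ ≤ M)
    (hM2 : ∀ γ : ℝ, ‖iteratedDeriv 2 x γ‖ ≤ M) :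
    ∀ γ η : ℝ,
      |(inner ℝ (deriv x γ - deriv x (γ - η) - η • iteratedDeriv 2 x γ
            + (η ^ 2 / 2) • iteratedDeriv 3 x γ) (deriv x γ) : ℝ)| ≤
        2 * |η| ^ 3 * M * ∫ r in (0 : ℝ)..1, ‖iteratedDeriv 3 x (γ + (r - 1) * η)‖ := by
  intro γ η
  set v : ℝ → EuclideanSpace ℝ (Fin 2) := deriv x with hv
  set w : ℝ → EuclideanSpace ℝ (Fin 2) := iteratedDeriv 2 x with hw
  set u : ℝ → EuclideanSpace ℝ (Fin 2) := iteratedDeriv 3 x with hu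
  set b : ℝ := γ - η with hb
  -- smoothness facts
  have hx3 : ContDiff ℝ ((2:WithTop ℕ∞) + 1) x := by exact_mod_cast hx
  have hv2 : ContDiff ℝ 2 v := (contDiff_succ_iff_deriv.mp hx3).2.2
  have hv2' : ContDiff ℝ ((1:WithTop ℕ∞) + 1) v := by exact_mod_cast hv2
  have hw1 : ContDiff ℝ 1 w := by
    have h2 : w = deriv v := by rw [hw, hv, iteratedDeriv_eq_iterate]; rfl
    rw [h2]; exact (contDiff_succ_iff_deriv.mp hv2').2.2
  have hcu : Continuous u := ContDiff.continuous_iteratedDeriv 3 hx (by norm_num)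
  have hcw : Continuous w := hw1.continuous
  have hcv : Continuous v := hv2.continuous
  have hderiv_v : deriv v = w := by
    rw [hv, hw, iteratedDeriv_eq_iterate]; rfl
  have hderiv_w : deriv w = u := by
    rw [hw, hu, iteratedDeriv_eq_iterate, iteratedDeriv_eq_iterate]
    exact (Function.iterate_succ_apply' deriv 2 x).symm
  have hdvw : ∀ t, HasDerivAt v (w t) t := by
    intro t
    have h := ((hv2.differentiable (by norm_num)) t).hasDerivAt
    rwa [hderiv_v] at h
  have hdwu : ∀ t, HasDerivAt w (u t) t := by
    intro t
    have h := ((hw1.differentiable (by norm_num)) t).hasDerivAt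
    rwa [hderiv_w] at h
  -- constant speed identities
  have h1 : ∀ t, (inner ℝ (w t) (v t) : ℝ) = 0 := by
    intro t
    have hconst : (fun s => (inner ℝ (v s) (v s) : ℝ)) = fun _ => c ^ 2 := by
      funext s; rw [real_inner_self_eq_norm_sq, hspeed s]
    have hd : HasDerivAt (fun s => (inner ℝ (v s) (v s) : ℝ))
        ((inner ℝ (v t) (w t) : ℝ) + inner ℝ (w t) (v t)) t :=
      (hdvw t).inner ℝ (hdvw t)
    have hd0 : HasDerivAt (fun s => (inner ℝ (v s) (v s) : ℝ)) 0 t := by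
      rw [hconst]; exact hasDerivAt_const t _
    have he := hd.unique hd0
    have hc : (inner ℝ (v t) (w t) : ℝ) = inner ℝ (w t) (v t) := real_inner_comm _ _
    linarith [he, hc]
  have h2 : ∀ t, (inner ℝ (u t) (v t) : ℝ) = - inner ℝ (w t) (w t) := by
    intro t
    have hconst : (fun s => (inner ℝ (w s) (v s) : ℝ)) = fun _ => 0 := funext fun s => h1 s
    have hd : HasDerivAt (fun s => (inner ℝ (w s) (v s) : ℝ))
        ((inner ℝ (w t) (w t) : ℝ) + inner ℝ (u t) (v t)) t :=
      (hdwu t).inner ℝ (hdvw t)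
    have hd0 : HasDerivAt (fun s => (inner ℝ (w s) (v s) : ℝ)) 0 t := by
      rw [hconst]; exact hasDerivAt_const t _
    have he := hd.unique hd0
    linarith [he]
  -- the integrand
  set F : ℝ → ℝ := fun t => (b - t) ^ 2 * inner ℝ (u t) (w t)
      + (b - t) * ((inner ℝ (u t) (v t) : ℝ) - inner ℝ (u t) (v γ)) with hF
  have hFcont : Continuous F := by
    apply Continuous.add
    · exact (((continuous_const.sub continuous_id).pow 2)).mul (hcu.inner hcw)
    · exact (continuous_const.sub continuous_id).mul
        ((hcu.inner hcv).sub (hcu.inner continuous_const))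
  -- derivative of Φ
  have hΦ : ∀ t, HasDerivAt (fun s => ((b - s) ^ 2 / 2) * inner ℝ (w s) (w s)
      + (b - s) * inner ℝ (w s) (v s) - (b - s) * inner ℝ (w s) (v γ)
      - (inner ℝ (v s) (v γ) : ℝ)) (F t) t := by
    intro t
    have hbs : HasDerivAt (fun s : ℝ => b - s) (-1) t := (hasDerivAt_id t).const_sub b
    have h_sq : HasDerivAt (fun s : ℝ => (b - s) ^ 2 / 2)
        ((2 * (b - t) ^ 1 * -1) / 2) t := (hbs.pow 2).div_const 2
    have hww : HasDerivAt (fun s => (inner ℝ (w s) (w s) : ℝ))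
        ((inner ℝ (w t) (u t) : ℝ) + inner ℝ (u t) (w t)) t := (hdwu t).inner ℝ (hdwu t)
    have hwv : HasDerivAt (fun s => (inner ℝ (w s) (v s) : ℝ))
        ((inner ℝ (w t) (w t) : ℝ) + inner ℝ (u t) (v t)) t := (hdwu t).inner ℝ (hdvw t)
    have hwvγ : HasDerivAt (fun s => (inner ℝ (w s) (v γ) : ℝ))
        ((inner ℝ (w t) ((0:EuclideanSpace ℝ (Fin 2))) : ℝ) + inner ℝ (u t) (v γ)) t :=
      (hdwu t).inner ℝ (hasDerivAt_const t (v γ))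
    have hvvγ : HasDerivAt (fun s => (inner ℝ (v s) (v γ) : ℝ))
        ((inner ℝ (v t) ((0:EuclideanSpace ℝ (Fin 2))) : ℝ) + inner ℝ (w t) (v γ)) t :=
      (hdvw t).inner ℝ (hasDerivAt_const t (v γ))
    have H := (((h_sq.mul hww).add (hbs.mul hwv)).sub (hbs.mul hwvγ)).sub hvvγ
    refine H.congr_deriv ?_
    have e1 := h1 t
    have e2 : (inner ℝ (w t) (u t) : ℝ) = inner ℝ (u t) (w t) := real_inner_comm _ _
    simp only [inner_zero_right, zero_add, pow_one]
    rw [e2, e1]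
    ring
  -- key identity
  have hkey : (inner ℝ (v γ - v b - η • w γ + (η ^ 2 / 2) • u γ) (v γ) : ℝ)
      = ∫ t in γ..b, F t := by
    rw [intervalIntegral.integral_eq_sub_of_hasDerivAt (fun t _ => hΦ t)
      (hFcont.intervalIntegrable γ b)]
    simp only [inner_sub_left, inner_add_left, real_inner_smul_left, sub_self]
    rw [h1 γ, h2 γ]
    ring_nf
    rw [hb]
    ring
  -- nonnegativity of M
  have hMnn : 0 ≤ M := le_trans (norm_nonneg _) (hM0 0)
  -- Lipschitz bound for v
  have hvlip : ∀ t, ‖v t - v γ‖ ≤ M * |t - γ| := by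
    intro t
    have h := convex_univ.norm_image_sub_le_of_norm_deriv_le (f := v)
      (fun s _ => (hv2.differentiable (by norm_num)) s)
      (fun s _ => by rw [hderiv_v]; exact hM2 s) (Set.mem_univ γ) (Set.mem_univ t)
    simpa [Real.norm_eq_abs] using h
  -- pointwise bound on the integrand
  have hptw : ∀ t ∈ Set.uIoc γ b, |F t| ≤ 2 * M * η ^ 2 * ‖u t‖ := by
    intro t ht
    have ht' : t ∈ Set.uIcc γ b := Set.uIoc_subset_uIcc ht
    have hbγ : |b - γ| = |η| := by
      have : b - γ = -η := by rw [hb]; ring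
      rw [this, abs_neg]
    have hbt : |b - t| ≤ |η| := by
      have h := Set.abs_sub_right_of_mem_uIcc ht'
      rwa [hbγ] at h
    have htγ : |t - γ| ≤ |η| := by
      have h := Set.abs_sub_left_of_mem_uIcc ht'
      rwa [hbγ] at h
    have hsq : (b - t) ^ 2 ≤ η ^ 2 := by
      rw [← sq_abs (b - t), ← sq_abs η]
      exact pow_le_pow_left₀ (abs_nonneg _) hbt 2
    have i1 : |(inner ℝ (u t) (w t) : ℝ)| ≤ ‖u t‖ * M :=
      (abs_real_inner_le_norm _ _).trans
        (mul_le_mul_of_nonneg_left (hM2 t) (norm_nonneg _))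
    have i2 : |(inner ℝ (u t) (v t) : ℝ) - inner ℝ (u t) (v γ)| ≤ ‖u t‖ * (M * |η|) := by
      rw [← inner_sub_right]
      refine (abs_real_inner_le_norm _ _).trans ?_
      refine mul_le_mul_of_nonneg_left ?_ (norm_nonneg _)
      exact (hvlip t).trans (mul_le_mul_of_nonneg_left htγ hMnn)
    calc |F t| ≤ |(b - t) ^ 2 * (inner ℝ (u t) (w t) : ℝ)|
          + |(b - t) * ((inner ℝ (u t) (v t) : ℝ) - inner ℝ (u t) (v γ))| := abs_add_le _ _
      _ = (b - t) ^ 2 * |(inner ℝ (u t) (w t) : ℝ)|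
          + |b - t| * |(inner ℝ (u t) (v t) : ℝ) - inner ℝ (u t) (v γ)| := by
          rw [abs_mul, abs_mul, abs_of_nonneg (sq_nonneg (b - t))]
      _ ≤ η ^ 2 * (‖u t‖ * M) + |η| * (‖u t‖ * (M * |η|)) :=
          add_le_add (mul_le_mul hsq i1 (abs_nonneg _) (sq_nonneg η))
            (mul_le_mul hbt i2 (abs_nonneg _) (abs_nonneg η))
      _ = 2 * M * η ^ 2 * ‖u t‖ := by
          rw [show |η| * (‖u t‖ * (M * |η|)) = η ^ 2 * (‖u t‖ * M) by
            rw [← sq_abs η]; ring]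
          ring
  -- integral estimates
  have hI1 : |∫ t in γ..b, F t| ≤ ∫ t in Set.uIoc γ b, |F t| := by
    simpa [Real.norm_eq_abs] using
      intervalIntegral.norm_integral_le_integral_norm_uIoc (f := F) (a := γ) (b := b) (μ := volume)
  have hint1 : IntegrableOn (fun t => |F t|) (Set.uIoc γ b) volume :=
    (hFcont.abs).integrableOn_uIoc
  have hint2 : IntegrableOn (fun t => 2 * M * η ^ 2 * ‖u t‖) (Set.uIoc γ b) volume :=
    (continuous_const.mul hcu.norm).integrableOn_uIoc
  have hI2 : (∫ t in Set.uIoc γ b, |F t|) ≤ ∫ t in Set.uIoc γ b, 2 * M * η ^ 2 * ‖u t‖ :=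
    setIntegral_mono_on hint1 hint2 measurableSet_uIoc hptw
  have hI3 : (∫ t in Set.uIoc γ b, 2 * M * η ^ 2 * ‖u t‖) =
      2 * M * η ^ 2 * ∫ t in Set.uIoc γ b, ‖u t‖ := integral_const_mul _ _
  set I : ℝ := ∫ t in Set.uIoc γ b, ‖u t‖ with hI
  set J : ℝ := ∫ r in (0:ℝ)..1, ‖u (γ + (r - 1) * η)‖ with hJ
  have hsub : η ^ 2 * I = |η| ^ 3 * J := by
    rcases eq_or_ne η 0 with h0 | hη
    · rw [h0]; simp
    · have hJK : J = η⁻¹ * ∫ t in (γ - η)..γ, ‖u t‖ := by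
        have hco : ∀ r : ℝ, γ + (r - 1) * η = η * r + (γ - η) := fun r => by ring
        rw [hJ]
        simp_rw [hco]
        rw [intervalIntegral.integral_comp_mul_add (fun t => ‖u t‖) hη (γ - η)]
        norm_num
      rcases le_or_gt 0 η with hpos | hneg
      · have hble : b ≤ γ := by rw [hb]; linarith
        have hK : (∫ t in (γ - η)..γ, ‖u t‖) = I := by
          rw [intervalIntegral.integral_of_le (show γ - η ≤ γ by linarith), hI,
            Set.uIoc_of_ge hble, hb]
        rw [hJK, hK, abs_of_nonneg hpos]
        field_simp
      · have hble : γ ≤ b := by rw [hb]; linarith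
        have hK : (∫ t in (γ - η)..γ, ‖u t‖) = -I := by
          rw [intervalIntegral.integral_symm, intervalIntegral.integral_of_le
            (show γ ≤ γ - η by linarith), hI, Set.uIoc_of_le hble, hb]
        rw [hJK, hK, abs_of_neg hneg]
        field_simp
  rw [hkey]
  calc |∫ t in γ..b, F t| ≤ ∫ t in Set.uIoc γ b, |F t| := hI1
    _ ≤ ∫ t in Set.uIoc γ b, 2 * M * η ^ 2 * ‖u t‖ := hI2
    _ = 2 * M * η ^ 2 * I := hI3
    _ = 2 * |η| ^ 3 * M * J := by linear_combination 2 * M * hsub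
end

section
/- Let x : 𝕋 → ℝ² be a C² curve with F(x)(γ,η) = |η|/|x(γ)−x(γ−η)| ≤ M and ∂_γ x · ∂²_γ x ≡ 0, and define A(γ) = ∫_{-π}^{π} (1/|x(γ)−x(γ−η)| − 1/(|∂_γ x(γ)||η|)) dη (where |∂_γx| is constant in γ). Then ∂_γ A(γ) = −∫_{-π}^{π} ((x(γ)−x(γ−η))·(∂_γ x(γ)−∂_γ x(γ−η)) − ∂_γ x(γ)·∂²_γ x(γ) η²)/|x(γ)−x(γ−η)|³ dη and ‖∂_γ A‖_{L^∞} ≤ 4π M³ ‖x‖²_{C^{2,1/2}}. -/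
set_option maxHeartbeats 1000000

open Real MeasureTheory intervalIntegral Set
open scoped Interval

lemma aux_abs_integral (η : ℝ) : abs (∫ s in (0:ℝ)..η, |s|) = η^2/2 := by
  rcases le_or_gt 0 η with h | h
  · rw [intervalIntegral.integral_congr (g := fun s => s) ?_, integral_id]
    · rw [show (η^2 - 0^2)/2 = η^2/2 by ring, abs_of_nonneg (by positivity)]
    · intro t ht
      rw [uIcc_of_le h] at ht
      exact abs_of_nonneg ht.1
  · rw [intervalIntegral.integral_congr (g := fun s => -s) ?_]
    · rw [intervalIntegral.integral_neg, integral_id, abs_neg,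
        show (η^2 - 0^2)/2 = η^2/2 by ring, abs_of_nonneg (by positivity)]
    · intro t ht
      rw [uIcc_of_ge h.le] at ht
      exact abs_of_nonpos ht.2

lemma aux_rpow_int : IntervalIntegrable (fun η : ℝ => |η| ^ (-(1/2) : ℝ)) volume (-π) π := by
  have h1 : IntervalIntegrable (fun η : ℝ => η ^ (-(1/2) : ℝ)) volume 0 π :=
    intervalIntegrable_rpow' (by norm_num)
  have h2 : IntervalIntegrable (fun η : ℝ => |η| ^ (-(1/2) : ℝ)) volume 0 π := by
    refine h1.congr ?_
    intro t ht
    rw [uIoc_of_le pi_pos.le] at ht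
    simp only [abs_of_pos ht.1]
  have h3 := (IntervalIntegrable.iff_comp_neg (f := fun η : ℝ => |η| ^ (-(1/2) : ℝ)) (a := 0) (b := π)).mp h2
  simp only [abs_neg, neg_zero] at h3
  exact h3.symm.trans h2

lemma aux_rpow_val : ∫ η in (-π:ℝ)..π, |η| ^ (-(1/2) : ℝ) = 4 * π ^ ((1:ℝ)/2) := by
  have h2 : IntervalIntegrable (fun η : ℝ => |η| ^ (-(1/2) : ℝ)) volume 0 π := by
    refine (intervalIntegrable_rpow' (r := -(1/2)) (by norm_num)).congr ?_
    intro t ht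
    rw [uIoc_of_le pi_pos.le] at ht
    simp only [abs_of_pos ht.1]
  have h3 : IntervalIntegrable (fun η : ℝ => |η| ^ (-(1/2) : ℝ)) volume (-π) 0 := by
    have h3 := (IntervalIntegrable.iff_comp_neg (f := fun η : ℝ => |η| ^ (-(1/2) : ℝ)) (a := 0) (b := π)).mp h2
    simp only [abs_neg, neg_zero] at h3
    exact h3.symm
  have hval : ∫ η in (0:ℝ)..π, |η| ^ (-(1/2) : ℝ) = 2 * π ^ ((1:ℝ)/2) := by
    rw [intervalIntegral.integral_congr (g := fun η : ℝ => η ^ (-(1/2) : ℝ)) ?_]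
    · rw [integral_rpow (Or.inl (by norm_num))]
      rw [Real.zero_rpow (by norm_num)]
      norm_num
      ring
    · intro t ht
      rw [uIcc_of_le pi_pos.le] at ht
      simp only
      rw [abs_of_nonneg ht.1]
  have hneg : ∫ η in (-π:ℝ)..0, |η| ^ (-(1/2) : ℝ) = ∫ η in (0:ℝ)..π, |η| ^ (-(1/2) : ℝ) := by
    have := intervalIntegral.integral_comp_neg (a := (0:ℝ)) (b := π)
      (fun η : ℝ => |η| ^ (-(1/2) : ℝ))
    simp only [abs_neg, neg_zero] at this
    rw [← this]
  rw [← intervalIntegral.integral_add_adjacent_intervals h3 h2, hneg, hval]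
  ring

/-- derivative of A(γ) = ∫ (1/|x(γ)−x(γ−η)| − 1/(|∂x||η|)) dη and its bound. -/
theorem stmt_19 (x : ℝ → EuclideanSpace ℝ (Fin 2))
    (hx : ContDiff ℝ 2 x) (hper : Function.Periodic x (2 * π))
    (c : ℝ) (hc : 0 < c) (hspeed : ∀ γ : ℝ, ‖deriv x γ‖ = c)
    (horth : ∀ γ : ℝ, inner ℝ (deriv x γ) (iteratedDeriv 2 x γ) = (0 : ℝ))
    (M : ℝ) (hM : 0 < M)
    (harcchord : ∀ γ η : ℝ, η ≠ 0 → |η| ≤ π → |η| ≤ M * ‖x γ - x (γ - η)‖)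
    (N : ℝ)
    (hN0 : ∀ γ : ℝ, ‖x γ‖ ≤ N) (hN1 : ∀ γ : ℝ, ‖deriv x γ‖ ≤ N)
    (hN2 : ∀ γ : ℝ, ‖iteratedDeriv 2 x γ‖ ≤ N)
    (hHol : ∀ a b : ℝ, ‖iteratedDeriv 2 x a - iteratedDeriv 2 x b‖ ≤ N * |a - b| ^ (1/2 : ℝ))
    (A : ℝ → ℝ)
    (hA : ∀ γ : ℝ, A γ =
      ∫ η in (-π)..π, (1 / ‖x γ - x (γ - η)‖ - 1 / (‖deriv x γ‖ * |η|))) :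
    ∀ γ : ℝ,
      HasDerivAt A
        (-∫ η in (-π)..π,
          ((inner ℝ (x γ - x (γ - η)) (deriv x γ - deriv x (γ - η)) : ℝ) -
              (inner ℝ (deriv x γ) (iteratedDeriv 2 x γ) : ℝ) * η ^ 2) /
            ‖x γ - x (γ - η)‖ ^ 3) γ ∧
      |∫ η in (-π)..π,
          ((inner ℝ (x γ - x (γ - η)) (deriv x γ - deriv x (γ - η)) : ℝ) -
              (inner ℝ (deriv x γ) (iteratedDeriv 2 x γ) : ℝ) * η ^ 2) /
            ‖x γ - x (γ - η)‖ ^ 3| ≤ 4 * π * M ^ 3 * N ^ 2 := by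
  have hπ : (0:ℝ) < π := pi_pos
  have hdiff : Differentiable ℝ x := hx.differentiable (by norm_num)
  have hd2 : iteratedDeriv 2 x = deriv (deriv x) := by
    rw [iteratedDeriv_succ, iteratedDeriv_one]
  have hdiff1 : Differentiable ℝ (deriv x) := by
    have h := hx.differentiable_iteratedDeriv 1 (by norm_num)
    rwa [iteratedDeriv_one] at h
  have hx'cont : Continuous (deriv x) := hdiff1.continuous
  have hx''cont : Continuous (iteratedDeriv 2 x) := hx.continuous_iteratedDeriv 2 (by norm_num)
  have hN : 0 ≤ N := le_trans (norm_nonneg _) (hN0 0)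
  have hcN : c ≤ N := by rw [← hspeed 0]; exact hN1 0
  -- Lipschitz bound for deriv x
  have hlip : ∀ a b : ℝ, ‖deriv x a - deriv x b‖ ≤ N * |a - b| := by
    intro a b
    have := Convex.norm_image_sub_le_of_norm_deriv_le (f := deriv x) (s := Set.univ)
      (fun t _ => hdiff1 t) (fun t _ => by rw [← hd2]; exact hN2 t) convex_univ
      (Set.mem_univ b) (Set.mem_univ a)
    simpa [Real.norm_eq_abs] using this
  -- FTC
  have hFTC1 : ∀ γ η : ℝ, (∫ t in (γ-η)..γ, deriv x t) = x γ - x (γ-η) :=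
    fun γ η => intervalIntegral.integral_deriv_eq_sub (fun t _ => hdiff t)
      (hx'cont.intervalIntegrable _ _)
  have hcont' : Continuous (deriv (deriv x)) := by rw [← hd2]; exact hx''cont
  have hFTC2 : ∀ γ η : ℝ, (∫ t in (γ-η)..γ, iteratedDeriv 2 x t)
      = deriv x γ - deriv x (γ-η) := by
    intro γ η
    rw [hd2]
    exact intervalIntegral.integral_deriv_eq_sub (fun t _ => hdiff1 t)
      (hcont'.intervalIntegrable _ _)
  -- estimate (a)
  have hEa : ∀ γ η : ℝ, ‖x γ - x (γ-η) - η • deriv x γ‖ ≤ N * η^2 / 2 := by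
    intro γ η
    have h1 : x γ - x (γ-η) - η • deriv x γ
        = ∫ t in (γ-η)..γ, (deriv x t - deriv x γ) := by
      rw [intervalIntegral.integral_sub (hx'cont.intervalIntegrable _ _)
        _root_.intervalIntegrable_const, hFTC1, intervalIntegral.integral_const, sub_sub_cancel]
    rw [h1]
    refine le_trans (intervalIntegral.norm_integral_le_abs_of_norm_le
      (g := fun t => N * |γ - t|) ?_ ?_) ?_
    · refine Filter.Eventually.of_forall fun t => ?_
      have := hlip t γ
      rwa [abs_sub_comm] at this
    · exact (continuous_const.mul ((continuous_const.sub continuous_id).abs)).intervalIntegrable _ _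
    · rw [intervalIntegral.integral_const_mul,
        intervalIntegral.integral_comp_sub_left (fun s => |s|) γ]
      simp only [sub_self, sub_sub_cancel]
      rw [abs_mul, aux_abs_integral, abs_of_nonneg hN]
      exact le_of_eq (by ring)
  -- estimate (b)
  have hEb : ∀ γ η : ℝ, ‖deriv x γ - deriv x (γ-η) - η • iteratedDeriv 2 x γ‖
      ≤ (N * |η| ^ ((1:ℝ)/2)) * |η| := by
    intro γ η
    have h1 : deriv x γ - deriv x (γ-η) - η • iteratedDeriv 2 x γ
        = ∫ t in (γ-η)..γ, (iteratedDeriv 2 x t - iteratedDeriv 2 x γ) := by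
      rw [intervalIntegral.integral_sub (hx''cont.intervalIntegrable _ _)
        _root_.intervalIntegrable_const, hFTC2, intervalIntegral.integral_const, sub_sub_cancel]
    rw [h1]
    have hb := intervalIntegral.norm_integral_le_of_norm_le_const
      (C := N * |η| ^ ((1:ℝ)/2)) (f := fun t => iteratedDeriv 2 x t - iteratedDeriv 2 x γ)
      (a := γ - η) (b := γ) ?_
    · rwa [sub_sub_cancel] at hb
    · intro t ht
      have htγ : |t - γ| ≤ |η| := by
        have h1' := ht.1
        have h2' := ht.2
        have hmin : γ - |η| ≤ min (γ-η) γ :=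
          le_min (by linarith [le_abs_self η]) (by linarith [abs_nonneg η])
        have hmax : max (γ-η) γ ≤ γ + |η| :=
          max_le (by linarith [neg_abs_le η]) (by linarith [abs_nonneg η])
        rw [abs_le]
        constructor <;> nlinarith [hmin.trans h1'.le, h2'.trans hmax]
      calc ‖iteratedDeriv 2 x t - iteratedDeriv 2 x γ‖ ≤ N * |t - γ| ^ ((1:ℝ)/2) := hHol t γ
        _ ≤ N * |η| ^ ((1:ℝ)/2) :=
          mul_le_mul_of_nonneg_left (Real.rpow_le_rpow (abs_nonneg _) htγ (by norm_num)) hN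
  -- numerator bound
  have hnum : ∀ γ η : ℝ, |(inner ℝ (x γ - x (γ - η)) (deriv x γ - deriv x (γ - η)) : ℝ)|
      ≤ N^2 * (|η|^3/2 + |η| ^ ((1:ℝ)/2) * |η|^2) := by
    intro γ η
    have hsplit : (inner ℝ (x γ - x (γ-η)) (deriv x γ - deriv x (γ-η)) : ℝ)
        = (inner ℝ (x γ - x (γ-η) - η • deriv x γ) (deriv x γ - deriv x (γ-η)) : ℝ)
          + (inner ℝ (η • deriv x γ) (deriv x γ - deriv x (γ-η) - η • iteratedDeriv 2 x γ) : ℝ)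
          + (inner ℝ (η • deriv x γ) (η • iteratedDeriv 2 x γ) : ℝ) := by
      simp only [inner_sub_left, inner_sub_right]
      ring
    have hor : (inner ℝ (η • deriv x γ) (η • iteratedDeriv 2 x γ) : ℝ) = 0 := by
      rw [real_inner_smul_left, real_inner_smul_right, horth γ]
      ring
    rw [hsplit, hor, add_zero]
    have hDle : ‖deriv x γ - deriv x (γ-η)‖ ≤ N * |η| := by
      have := hlip γ (γ - η)
      rwa [sub_sub_cancel] at this
    have hvle : ‖η • deriv x γ‖ ≤ |η| * N := by
      rw [norm_smul, Real.norm_eq_abs]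
      exact mul_le_mul_of_nonneg_left (hN1 γ) (abs_nonneg η)
    have h1 : |(inner ℝ (x γ - x (γ-η) - η • deriv x γ) (deriv x γ - deriv x (γ-η)) : ℝ)|
        ≤ (N * η^2/2) * (N * |η|) :=
      (abs_real_inner_le_norm _ _).trans
        (mul_le_mul (hEa γ η) hDle (norm_nonneg _) (by positivity))
    have h2 : |(inner ℝ (η • deriv x γ) (deriv x γ - deriv x (γ-η) - η • iteratedDeriv 2 x γ) : ℝ)|
        ≤ (|η| * N) * ((N * |η| ^ ((1:ℝ)/2)) * |η|) :=
      (abs_real_inner_le_norm _ _).trans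
        (mul_le_mul hvle (hEb γ η) (norm_nonneg _) (by positivity))
    calc |(inner ℝ (x γ - x (γ-η) - η • deriv x γ) (deriv x γ - deriv x (γ-η)) : ℝ)
          + (inner ℝ (η • deriv x γ) (deriv x γ - deriv x (γ-η) - η • iteratedDeriv 2 x γ) : ℝ)|
        ≤ _ + _ := abs_add_le _ _
      _ ≤ (N * η^2/2) * (N * |η|) + (|η| * N) * ((N * |η| ^ ((1:ℝ)/2)) * |η|) :=
          add_le_add h1 h2
      _ ≤ N^2 * (|η|^3/2 + |η| ^ ((1:ℝ)/2) * |η|^2) := by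
          rw [← sq_abs η]
          exact le_of_eq (by ring)
  -- chord-arc lower bound
  have hdlow : ∀ γ η : ℝ, η ≠ 0 → |η| ≤ π → |η| / M ≤ ‖x γ - x (γ - η)‖ := by
    intro γ η h0 hπ'
    rw [div_le_iff₀ hM]
    linarith [harcchord γ η h0 hπ']
  have hdpos : ∀ γ η : ℝ, η ≠ 0 → |η| ≤ π → 0 < ‖x γ - x (γ - η)‖ := fun γ η h0 hπ' =>
    lt_of_lt_of_le (div_pos (abs_pos.mpr h0) hM) (hdlow γ η h0 hπ')
  -- the bound function
  set bound : ℝ → ℝ := fun η => M^3 * N^2 * (1/2 + |η| ^ ((1:ℝ)/2) / |η|) with hbound_def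
  have hg_bound : ∀ γ η : ℝ, η ≠ 0 → |η| ≤ π →
      |(inner ℝ (x γ - x (γ-η)) (deriv x γ - deriv x (γ-η)) : ℝ) / ‖x γ - x (γ-η)‖ ^ 3|
        ≤ bound η := by
    intro γ η h0 hπ'
    have hηpos : 0 < |η| := abs_pos.mpr h0
    have hd := hdlow γ η h0 hπ'
    have hdp := hdpos γ η h0 hπ'
    rw [abs_div, abs_of_nonneg (by positivity : (0:ℝ) ≤ ‖x γ - x (γ-η)‖ ^ 3)]
    have hcube : (|η|/M)^3 ≤ ‖x γ - x (γ-η)‖^3 := by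
      gcongr
    calc |(inner ℝ (x γ - x (γ-η)) (deriv x γ - deriv x (γ-η)) : ℝ)| / ‖x γ - x (γ-η)‖ ^ 3
        ≤ (N^2 * (|η|^3/2 + |η| ^ ((1:ℝ)/2) * |η|^2)) / ((|η|/M)^3) := by
          apply div_le_div₀ (by positivity) (hnum γ η) (by positivity) hcube
      _ = bound η := by
          rw [hbound_def]
          field_simp
  -- pointwise differentiability in γ
  have hderivF : ∀ η : ℝ, η ≠ 0 → |η| ≤ π → ∀ γ : ℝ,
      HasDerivAt (fun γ => 1/‖x γ - x (γ-η)‖ - 1/(c*|η|))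
        (-((inner ℝ (x γ - x (γ-η)) (deriv x γ - deriv x (γ-η)) : ℝ)
            / ‖x γ - x (γ-η)‖^3)) γ := by
    intro η h0 hπ' γ
    have hdp : 0 < ‖x γ - x (γ-η)‖ := hdpos γ η h0 hπ'
    have h1 : HasDerivAt (fun γ => x (γ - η)) (deriv x (γ - η)) γ := by
      have := ((hdiff (γ - η)).hasDerivAt).scomp γ ((hasDerivAt_id γ).sub_const η)
      exact HasDerivAt.comp_sub_const γ η (hdiff (γ - η)).hasDerivAt
    have hu : HasDerivAt (fun γ => x γ - x (γ - η)) (deriv x γ - deriv x (γ - η)) γ :=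
      (hdiff γ).hasDerivAt.sub h1
    have hq : HasDerivAt (fun γ => (inner ℝ (x γ - x (γ-η)) (x γ - x (γ-η)) : ℝ))
        (2 * (inner ℝ (x γ - x (γ-η)) (deriv x γ - deriv x (γ-η)) : ℝ)) γ := by
      have := hu.inner ℝ hu
      refine this.congr_deriv ?_
      rw [real_inner_comm (deriv x γ - deriv x (γ-η)) (x γ - x (γ-η))]
      ring
    have hqval : (inner ℝ (x γ - x (γ-η)) (x γ - x (γ-η)) : ℝ) = ‖x γ - x (γ-η)‖^2 :=
      real_inner_self_eq_norm_sq _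
    have hqne : (inner ℝ (x γ - x (γ-η)) (x γ - x (γ-η)) : ℝ) ≠ 0 := by
      rw [hqval]; positivity
    have hsq := (Real.hasDerivAt_sqrt hqne).comp γ hq
    simp only [Function.comp_def] at hsq
    have hsqval : Real.sqrt (inner ℝ (x γ - x (γ-η)) (x γ - x (γ-η)) : ℝ) = ‖x γ - x (γ-η)‖ :=
      (norm_eq_sqrt_real_inner _).symm
    have hsne : Real.sqrt (inner ℝ (x γ - x (γ-η)) (x γ - x (γ-η)) : ℝ) ≠ 0 := by
      rw [hsqval]; exact hdp.ne'
    have hinv := (hsq.inv hsne).sub_const (1/(c*|η|))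
    have hfun : (fun γ => (Real.sqrt (inner ℝ (x γ - x (γ-η)) (x γ - x (γ-η)) : ℝ))⁻¹
          - 1/(c*|η|))
        = fun γ => 1/‖x γ - x (γ-η)‖ - 1/(c*|η|) := by
      funext t
      rw [← norm_eq_sqrt_real_inner]
      simp only [one_div]
    simp only [Pi.inv_apply] at hinv
    rw [hfun] at hinv
    refine hinv.congr_deriv ?_
    rw [hsqval]
    have hgen : ∀ n a : ℝ, a ≠ 0 → -(n / a^3) = -(1/(2*a) * (2*n)) / a^2 := by
      intro n a ha
      field_simp
    exact (hgen _ _ hdp.ne').symm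
  -- ae facts
  have hΙ : Ι (-π) π = Ioc (-π) π := uIoc_of_le (by linarith)
  have hne0 : ∀ᵐ η : ℝ, η ≠ (0:ℝ) := by
    rw [ae_iff]
    simp only [ne_eq, not_not, Set.setOf_eq_eq_singleton]
    exact Real.volume_singleton
  -- measurability of F γ
  have hFmeas : ∀ γ : ℝ, AEStronglyMeasurable (fun η => 1/‖x γ - x (γ-η)‖ - 1/(c*|η|))
      (volume.restrict (Ι (-π) π)) := by
    intro γ
    have m1 : Measurable fun η : ℝ => (‖x γ - x (γ - η)‖)⁻¹ :=
      ((continuous_const.sub (hx.continuous.comp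
        (continuous_const.sub continuous_id))).norm).measurable.inv
    have m2 : Measurable fun η : ℝ => (c * |η|)⁻¹ :=
      (measurable_const.mul continuous_abs.measurable).inv
    simpa only [one_div, Pi.sub_def] using (m1.sub m2).aestronglyMeasurable
  -- integrability of F at any basepoint
  have hFint : ∀ γ₀ : ℝ, IntervalIntegrable (fun η => 1/‖x γ₀ - x (γ₀-η)‖ - 1/(c*|η|))
      volume (-π) π := by
    intro γ₀
    rw [intervalIntegrable_iff]
    refine Integrable.mono' ((intervalIntegrable_const (c := M*N/(2*c))).def') (hFmeas γ₀) ?_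
    filter_upwards [ae_restrict_mem measurableSet_uIoc, ae_restrict_of_ae hne0] with η hη hη0
    rw [hΙ] at hη
    have hπ' : |η| ≤ π := abs_le.mpr ⟨by linarith [hη.1], hη.2⟩
    have hηpos : 0 < |η| := abs_pos.mpr hη0
    have hη2 : 0 < η^2 := by rw [← sq_abs]; positivity
    have hdp : 0 < ‖x γ₀ - x (γ₀-η)‖ := hdpos γ₀ η hη0 hπ'
    have hd := hdlow γ₀ η hη0 hπ'
    have key : 1/‖x γ₀ - x (γ₀-η)‖ - 1/(c*|η|)
        = (c*|η| - ‖x γ₀ - x (γ₀-η)‖) / (‖x γ₀ - x (γ₀-η)‖ * (c*|η|)) := by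
      field_simp
    rw [Real.norm_eq_abs, key, abs_div]
    have h1 : |c*|η| - ‖x γ₀ - x (γ₀-η)‖| ≤ N*η^2/2 := by
      calc |c*|η| - ‖x γ₀ - x (γ₀-η)‖|
          = |‖η • deriv x γ₀‖ - ‖x γ₀ - x (γ₀-η)‖| := by
            rw [norm_smul, Real.norm_eq_abs, hspeed γ₀, mul_comm]
        _ ≤ ‖η • deriv x γ₀ - (x γ₀ - x (γ₀-η))‖ := abs_norm_sub_norm_le _ _
        _ = ‖x γ₀ - x (γ₀-η) - η • deriv x γ₀‖ := norm_sub_rev _ _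
        _ ≤ N*η^2/2 := hEa γ₀ η
    have hden : c*η^2/M ≤ |‖x γ₀ - x (γ₀-η)‖ * (c*|η|)| := by
      rw [abs_of_pos (by positivity)]
      have : c*η^2/M = (|η|/M) * (c*|η|) := by
        rw [← sq_abs]; ring
      rw [this]
      exact mul_le_mul_of_nonneg_right hd (by positivity)
    calc |c*|η| - ‖x γ₀ - x (γ₀-η)‖| / |‖x γ₀ - x (γ₀-η)‖ * (c*|η|)|
        ≤ (N*η^2/2) / (c*η^2/M) := div_le_div₀ (by positivity) h1 (by positivity) hden
      _ = M*N/(2*c) := by field_simp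
  -- bound is integrable
  have hbound_eq : ∀ η : ℝ, |η| ^ ((1:ℝ)/2) / |η| = |η| ^ (-(1/2) : ℝ) := by
    intro η
    rcases eq_or_ne η 0 with rfl | h0
    · simp only [abs_zero]
      rw [Real.zero_rpow (by norm_num), Real.zero_rpow (by norm_num), zero_div]
    · have h1 : 0 < |η| := abs_pos.mpr h0
      rw [show (-(1/2) : ℝ) = (1:ℝ)/2 - 1 by norm_num, Real.rpow_sub h1, Real.rpow_one]
  have hbound_int : IntervalIntegrable bound volume (-π) π := by
    rw [hbound_def]
    have h := ((intervalIntegrable_const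
      (c := (1/2:ℝ)) (a := -π) (b := π) (μ := volume)).add
      (by simpa only [hbound_eq] using aux_rpow_int)).const_mul (M^3*N^2)
    simpa only [hbound_eq] using h
  -- main claims
  intro γ₀
  have h_bound : ∀ᵐ η : ℝ, η ∈ Ι (-π) π → ∀ γ ∈ Metric.ball γ₀ 1,
      ‖-((inner ℝ (x γ - x (γ-η)) (deriv x γ - deriv x (γ-η)) : ℝ)
          / ‖x γ - x (γ-η)‖^3)‖ ≤ bound η := by
    filter_upwards [hne0] with η hη0
    intro hηΙ γ _
    rw [hΙ] at hηΙ
    have hπ' : |η| ≤ π := abs_le.mpr ⟨by linarith [hηΙ.1], hηΙ.2⟩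
    rw [Real.norm_eq_abs, abs_neg]
    exact hg_bound γ η hη0 hπ'
  have h_diff : ∀ᵐ η : ℝ, η ∈ Ι (-π) π → ∀ γ ∈ Metric.ball γ₀ 1,
      HasDerivAt (fun γ => 1/‖x γ - x (γ-η)‖ - 1/(c*|η|))
        (-((inner ℝ (x γ - x (γ-η)) (deriv x γ - deriv x (γ-η)) : ℝ)
            / ‖x γ - x (γ-η)‖^3)) γ := by
    filter_upwards [hne0] with η hη0
    intro hηΙ γ _
    rw [hΙ] at hηΙ
    have hπ' : |η| ≤ π := abs_le.mpr ⟨by linarith [hηΙ.1], hηΙ.2⟩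
    exact hderivF η hη0 hπ' γ
  have hF'meas : AEStronglyMeasurable
      (fun η => -((inner ℝ (x γ₀ - x (γ₀-η)) (deriv x γ₀ - deriv x (γ₀-η)) : ℝ)
        / ‖x γ₀ - x (γ₀-η)‖^3)) (volume.restrict (Ι (-π) π)) := by
    have c1 : Continuous fun η : ℝ =>
        (inner ℝ (x γ₀ - x (γ₀ - η)) (deriv x γ₀ - deriv x (γ₀ - η)) : ℝ) :=
      (continuous_const.sub (hx.continuous.comp (continuous_const.sub continuous_id))).inner
        (continuous_const.sub (hx'cont.comp (continuous_const.sub continuous_id)))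
    have c2 : Continuous fun η : ℝ => ‖x γ₀ - x (γ₀ - η)‖ ^ 3 :=
      ((continuous_const.sub (hx.continuous.comp
        (continuous_const.sub continuous_id))).norm).pow 3
    exact ((c1.measurable.div c2.measurable).neg).aestronglyMeasurable
  have main := intervalIntegral.hasDerivAt_integral_of_dominated_loc_of_deriv_le
    (F := fun γ η => 1/‖x γ - x (γ-η)‖ - 1/(c*|η|))
    (F' := fun γ η => -((inner ℝ (x γ - x (γ-η)) (deriv x γ - deriv x (γ-η)) : ℝ)
      / ‖x γ - x (γ-η)‖^3))
    (bound := bound) (a := -π) (b := π) (x₀ := γ₀) (Metric.ball_mem_nhds γ₀ one_pos)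
    (Filter.Eventually.of_forall fun γ => hFmeas γ)
    (hFint γ₀) hF'meas h_bound hbound_int h_diff
  obtain ⟨-, hmain⟩ := main
  have hAfun : A = fun γ => ∫ η in (-π)..π, (1/‖x γ - x (γ-η)‖ - 1/(c*|η|)) := by
    funext γ
    rw [hA γ, hspeed γ]
  constructor
  · rw [hAfun]
    refine hmain.congr_deriv ?_
    rw [horth γ₀]
    simp only [zero_mul, sub_zero]
    rw [← intervalIntegral.integral_neg]
  · rw [horth γ₀]
    simp only [zero_mul, sub_zero]
    have hb := intervalIntegral.norm_integral_le_abs_of_norm_le (μ := volume) (a := -π) (b := π)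
      (f := fun η => (inner ℝ (x γ₀ - x (γ₀-η)) (deriv x γ₀ - deriv x (γ₀-η)) : ℝ)
        / ‖x γ₀ - x (γ₀-η)‖^3) (g := bound) ?_ hbound_int
    · rw [Real.norm_eq_abs] at hb
      refine hb.trans ?_
      have hval : (∫ η in (-π)..π, bound η) = M^3*N^2*(π + 4 * π ^ ((1:ℝ)/2)) := by
        rw [hbound_def]
        rw [intervalIntegral.integral_const_mul]
        have hsum : (∫ η in (-π)..π, (1/2 + |η| ^ ((1:ℝ)/2) / |η|))
            = (∫ _η in (-π)..π, (1/2 : ℝ)) + ∫ η in (-π)..π, |η| ^ ((1:ℝ)/2) / |η| := by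
          refine intervalIntegral.integral_add intervalIntegrable_const ?_
          simp only [hbound_eq]
          exact aux_rpow_int
        rw [hsum, intervalIntegral.integral_const]
        have h2 : (∫ η in (-π)..π, |η| ^ ((1:ℝ)/2) / |η|) = 4 * π ^ ((1:ℝ)/2) := by
          simp only [hbound_eq]
          exact aux_rpow_val
        rw [h2]
        rw [smul_eq_mul]
        ring
      rw [hval]
      have hs2 : π ^ ((1:ℝ)/2) * π ^ ((1:ℝ)/2) = π := by
        rw [← Real.rpow_add hπ, show (1:ℝ)/2 + (1:ℝ)/2 = 1 by norm_num, Real.rpow_one]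
      have hsnn : 0 ≤ π ^ ((1:ℝ)/2) := Real.rpow_nonneg hπ.le _
      have habs : |M^3*N^2*(π + 4 * π ^ ((1:ℝ)/2))| = M^3*N^2*(π + 4 * π ^ ((1:ℝ)/2)) := by
        apply abs_of_nonneg
        positivity
      rw [habs]
      have hMN : (0:ℝ) ≤ M^3*N^2 := by positivity
      have hkey : π + 4 * π ^ ((1:ℝ)/2) ≤ 4 * π := by
        nlinarith [sq_nonneg (3 * π ^ ((1:ℝ)/2) - 4), Real.pi_gt_three]
      calc M^3*N^2*(π + 4 * π ^ ((1:ℝ)/2)) ≤ M^3*N^2*(4*π) :=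
            mul_le_mul_of_nonneg_left hkey hMN
        _ = 4 * π * M^3 * N^2 := by ring
    · filter_upwards [ae_restrict_mem measurableSet_uIoc, ae_restrict_of_ae hne0] with η hη hη0
      rw [hΙ] at hη
      have hπ' : |η| ≤ π := abs_le.mpr ⟨by linarith [hη.1], hη.2⟩
      rw [Real.norm_eq_abs]
      exact hg_bound γ₀ η hη0 hπ'
end
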